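/- arXiv:1806.03823 — 8 statements merged into one kernel-verified Lean document; each statement's English description precedes it below -/
import Mathlib

section
/- Define Q_k^α to be the number of chains of intervals [A_0,B_0] ⊂ [A_1,B_1] ⊂ ⋯ ⊂ [A_k,B_k] of length k terminating at a fixed interval [A,B] with |B \ A| = α, where intervals are pairs (A',B') with A ⊆ A' ⊆ B' ⊆ B (excluding the case A'=A, B'=B for proper containment), ordered by reverse inclusion of the first component and inclusion of the second. Then Q_k^α = Σ_{i=0}^{k} (-1)^i C(k,i) (1+2(k-i))^α. -/
open Finset

namespace IntervalChainAux

lemma fin3_cases (v : Fin 3) : v = 0 ∨ v = 1 ∨ v = 2 := by revert v; decide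

/-- valid trajectories of a single element of `B \ A` along a weak chain,
with equality forced at positions in `T`. -/
def V (k : ℕ) (T : Finset (Fin k)) : Finset (Fin (k+1) → Fin 3) :=
  univ.filter (fun t => t (Fin.last k) = 1 ∧
    (∀ i j : Fin (k+1), i ≤ j → (t j = 0 → t i = 0) ∧ (t i ≠ 2 → t j ≠ 2)) ∧
    ∀ u ∈ T, t u.castSucc = t u.succ)

lemma mem_V {k : ℕ} {T : Finset (Fin k)} {t : Fin (k+1) → Fin 3} :
    t ∈ V k T ↔ t (Fin.last k) = 1 ∧
      (∀ i j : Fin (k+1), i ≤ j → (t j = 0 → t i = 0) ∧ (t i ≠ 2 → t j ≠ 2)) ∧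
      ∀ u ∈ T, t u.castSucc = t u.succ := by
  simp [V]

def J (k : ℕ) (T : Finset (Fin k)) : Finset (Fin (k+1)) :=
  univ.filter (fun j => j ≠ 0 ∧ ∀ u ∈ T, j ≠ u.succ)

lemma card_J {k : ℕ} (T : Finset (Fin k)) : (J k T).card = k - T.card := by
  have h1 : J k T = univ \ insert (0 : Fin (k+1)) (T.image Fin.succ) := by
    ext j
    simp only [J, mem_filter, mem_univ, true_and, mem_sdiff, mem_insert, mem_image, not_or,
      not_exists, not_and]
    constructor
    · rintro ⟨h0, h⟩; exact ⟨h0, fun u hu he => (h u hu) he.symm⟩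
    · rintro ⟨h0, h⟩; exact ⟨h0, fun u hu he => (h u hu) he.symm⟩
  have h0 : (0 : Fin (k+1)) ∉ T.image Fin.succ := by
    simp [Fin.succ_ne_zero, eq_comm]
  rw [h1, card_sdiff_of_subset (subset_univ _), card_insert_of_notMem h0,
    card_image_of_injective _ (Fin.succ_injective k), card_univ, Fintype.card_fin]
  have := T.card_le_univ
  rw [Fintype.card_fin] at this
  omega

def P (k : ℕ) (T : Finset (Fin k)) : Finset (Fin 3 × Fin (k+1)) :=
  insert (1, 0) (({0, 2} : Finset (Fin 3)) ×ˢ J k T)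

lemma card_P {k : ℕ} (T : Finset (Fin k)) : (P k T).card = 1 + 2 * (k - T.card) := by
  have h1 : ((1 : Fin 3), (0 : Fin (k+1))) ∉ ({0, 2} : Finset (Fin 3)) ×ˢ J k T := by
    simp only [mem_product, mem_insert, mem_singleton, not_and_or]
    left; decide
  rw [P, card_insert_of_notMem h1, card_product, card_J]
  have : ({0, 2} : Finset (Fin 3)).card = 2 := by decide
  rw [this]
  omega

def psi {k : ℕ} (p : Fin 3 × Fin (k+1)) : Fin (k+1) → Fin 3 :=
  fun i => if p.2 ≤ i then 1 else p.1

lemma card_V {k : ℕ} (T : Finset (Fin k)) : (V k T).card = 1 + 2 * (k - T.card) := by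
  rw [← card_P T]
  symm
  apply Finset.card_bij (fun p _ => psi p)
  · -- maps into V
    rintro ⟨s, j⟩ hp
    rw [P, mem_insert] at hp
    rw [mem_V]
    rcases hp with hp | hp
    · obtain ⟨rfl, rfl⟩ : s = 1 ∧ j = 0 := by
        exact ⟨congrArg Prod.fst hp, congrArg Prod.snd hp⟩
      refine ⟨by simp [psi, Fin.zero_le], ?_, ?_⟩
      · intro i i' _
        simp [psi, Fin.zero_le]
      · intro u _
        simp [psi, Fin.zero_le]
    · rw [mem_product] at hp
      obtain ⟨hs, hj⟩ := hp
      rw [J, mem_filter] at hj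
      obtain ⟨-, hj0, hjT⟩ := hj
      have hs1 : s ≠ 1 := by
        rcases mem_insert.1 hs with rfl | hs
        · decide
        · rw [mem_singleton] at hs; subst hs; decide
      refine ⟨?_, ?_, ?_⟩
      · simp [psi, Fin.le_last]
      · intro i i' hii'
        constructor
        · intro h0
          by_cases h : j ≤ i'
          · rw [psi, if_pos h] at h0; exact absurd h0 (by decide)
          · rw [psi, if_neg h] at h0
            rw [psi, if_neg (fun hc => h (le_trans hc hii'))]
            exact h0
        · intro h2 hc
          by_cases h : j ≤ i'
          · rw [psi, if_pos h] at hc; exact absurd hc (by decide)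
          · rw [psi, if_neg h] at hc
            exact h2 (by rw [psi, if_neg (fun hd => h (le_trans hd hii'))]; exact hc)
      · intro u hu
        by_cases h : j ≤ u.castSucc
        · rw [psi, psi, if_pos h, if_pos (le_trans h (u.castSucc_le_succ))]
        · have h2 : ¬ j ≤ u.succ := by
            intro hc
            apply hjT u hu
            apply Fin.ext
            simp only [Fin.le_def, Fin.coe_castSucc, Fin.val_succ] at h hc ⊢
            omega
          rw [psi, psi, if_neg h, if_neg h2]
  · -- injective
    rintro ⟨s, j⟩ hp ⟨s', j'⟩ hp' heq
    have key : ∀ a b : Fin 3 × Fin (k+1), a ∈ P k T → b ∈ P k T →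
        psi a = psi b → a.2 ≤ b.2 := by
      rintro ⟨s, j⟩ ⟨s', j'⟩ hp hp' heq
      by_contra hlt
      -- then j' < j, evaluate at j'
      have h1 : psi (s', j') j' = 1 := by rw [psi, if_pos le_rfl]
      have h2 : psi (s, j) j' = s := by
        rw [psi, if_neg]; exact hlt
      have hs1 : s = 1 := by rw [heq] at h2; rw [h1] at h2; exact h2.symm
      -- s = 1 means (s,j) = (1,0)
      have hj0 : j = 0 := by
        rw [P, mem_insert] at hp
        rcases hp with hp | hp
        · exact congrArg Prod.snd hp
        · rw [mem_product] at hp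
          exfalso
          rcases mem_insert.1 hp.1 with h | h
          · rw [hs1] at h; exact (by decide : (1 : Fin 3) ≠ 0) h
          · rw [mem_singleton] at h; rw [hs1] at h
            exact (by decide : (1 : Fin 3) ≠ 2) h
      exact hlt (hj0 ▸ Fin.zero_le j')
    have hle1 := key _ _ hp hp' heq
    have hle2 := key _ _ hp' hp heq.symm
    have hj : j = j' := le_antisymm hle1 hle2
    subst hj
    have hs : s = s' := by
      by_cases h0 : j = 0
      · -- both are (1,0) or generic with j ≠ 0; if j = 0 then psi evals to 1 everywhere...
        -- evaluate at 0: psi (s,j) 0 = 1 = psi (s',j) 0; need s = s'.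
        -- if j = 0, membership forces: either p = (1,0) or j ∈ J which needs j ≠ 0.
        have hh : ∀ s'' : Fin 3, (s'', j) ∈ P k T → s'' = 1 := by
          intro s'' hmem
          rw [P, mem_insert] at hmem
          rcases hmem with h | h
          · exact congrArg Prod.fst h
          · rw [mem_product] at h
            exfalso
            have := (mem_filter.1 (by exact h.2 : j ∈ J k T)).2.1
            exact this h0
        rw [hh s hp, hh s' hp']
      · have : ¬ j ≤ 0 := by
          intro hc; exact h0 (le_antisymm hc (Fin.zero_le j))
        have e1 : psi (s, j) 0 = s := by rw [psi, if_neg this]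
        have e2 : psi (s', j) 0 = s' := by rw [psi, if_neg this]
        rw [← e1, ← e2, heq]
    rw [hs]
  · -- surjective
    intro t ht
    rw [mem_V] at ht
    obtain ⟨hlast, hmono, hT⟩ := ht
    have hne : (univ.filter (fun i => t i = 1)).Nonempty :=
      ⟨Fin.last k, by simp [hlast]⟩
    set m := (univ.filter (fun i => t i = 1)).min' hne with hm
    have hm1 : t m = 1 := (mem_filter.1 ((univ.filter (fun i => t i = 1)).min'_mem hne)).2
    have hiff : ∀ i, t i = 1 ↔ m ≤ i := by
      intro i
      constructor
      · intro h; exact min'_le _ _ (by simp [h])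
      · intro h
        have h2 : t i ≠ 2 := (hmono m i h).2 (by rw [hm1]; decide)
        have h0 : t i ≠ 0 := fun hc => by
          have := (hmono m i h).1 hc; rw [hm1] at this; exact absurd this (by decide)
        rcases fin3_cases (t i) with h | h | h
        · exact absurd h h0
        · exact h
        · exact absurd h h2
    have hpre : ∀ i : Fin (k+1), ¬ m ≤ i → t i = t 0 := by
      intro i hi
      have hi1 : t i ≠ 1 := fun hc => hi ((hiff i).1 hc)
      have h01 : t 0 ≠ 1 := fun hc => hi (le_trans ((hiff 0).1 hc) (Fin.zero_le i))
      rcases fin3_cases (t 0) with h | h | h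
      · have h2 : t i ≠ 2 := (hmono 0 i (Fin.zero_le i)).2 (by rw [h]; decide)
        rcases fin3_cases (t i) with h' | h' | h'
        · rw [h', h]
        · exact absurd h' hi1
        · exact absurd h' h2
      · exact absurd h h01
      · have h0 : t i ≠ 0 := fun hc => by
          have := (hmono 0 i (Fin.zero_le i)).1 hc
          rw [h] at this; exact absurd this (by decide)
        rcases fin3_cases (t i) with h' | h' | h'
        · exact absurd h' h0
        · exact absurd h' hi1
        · rw [h', h]
    refine ⟨(t 0, m), ?_, ?_⟩
    · -- membership in P
      by_cases h01 : t 0 = 1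
      · have hm0 : m = 0 := le_antisymm ((hiff 0).1 h01) (Fin.zero_le m)
        rw [P, h01, hm0]
        exact mem_insert_self _ _
      · rw [P, mem_insert]
        right
        rw [mem_product]
        constructor
        · rcases fin3_cases (t 0) with h | h | h
          · rw [h]; exact mem_insert_self _ _
          · exact absurd h h01
          · rw [h]; exact mem_insert_of_mem (mem_singleton_self _)
        · rw [J, mem_filter]
          refine ⟨mem_univ _, ?_, ?_⟩
          · intro hc
            exact h01 ((hiff 0).2 (hc ▸ le_rfl))
          · intro u hu hc
            have hc' : m = u.succ := hc
            have h1 : t u.succ = 1 := (hiff _).2 (hc' ▸ le_rfl)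
            have h2 : t u.castSucc ≠ 1 := by
              intro he
              have := (hiff _).1 he
              rw [hc'] at this
              exact absurd (lt_of_le_of_lt this u.castSucc_lt_succ) (lt_irrefl _)
            exact h2 ((hT u hu).trans h1)
    · -- psi (t 0, m) = t
      funext i
      by_cases h : m ≤ i
      · rw [psi]; dsimp only; rw [if_pos h, ((hiff i).2 h)]
      · rw [psi]; dsimp only; rw [if_neg h, (hpre i h)]

variable {n : ℕ}

def weakP {k : ℕ} (A B : Finset (Fin n)) (T : Finset (Fin k))
    (c : Fin (k+1) → Finset (Fin n) × Finset (Fin n)) : Prop :=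
  (∀ i, A ⊆ (c i).1 ∧ (c i).1 ⊆ (c i).2 ∧ (c i).2 ⊆ B) ∧
  (∀ i j : Fin (k+1), i ≤ j → (c j).1 ⊆ (c i).1 ∧ (c i).2 ⊆ (c j).2) ∧
  c (Fin.last k) = (A, B) ∧
  ∀ u ∈ T, c u.castSucc = c u.succ

instance {k : ℕ} (A B : Finset (Fin n)) (T : Finset (Fin k)) :
    DecidablePred (weakP A B T) := fun c => by unfold weakP; infer_instance

def W {k : ℕ} (A B : Finset (Fin n)) (T : Finset (Fin k)) :
    Finset (Fin (k+1) → Finset (Fin n) × Finset (Fin n)) :=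
  univ.filter (weakP A B T)

/-- the state of an element along a chain -/
def st {k : ℕ} (c : Fin (k+1) → Finset (Fin n) × Finset (Fin n)) (x : Fin n) (i : Fin (k+1)) :
    Fin 3 :=
  if x ∈ (c i).1 then 0 else if x ∈ (c i).2 then 1 else 2

lemma st_eq_zero_iff {k : ℕ} {c : Fin (k+1) → Finset (Fin n) × Finset (Fin n)} {x : Fin n}
    {i : Fin (k+1)} : st c x i = 0 ↔ x ∈ (c i).1 := by
  constructor
  · intro h
    by_contra hx
    rw [st, if_neg hx] at h
    revert h
    split_ifs
    · decide
    · decide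
  · intro h; rw [st, if_pos h]

lemma st_eq_two_iff {k : ℕ} {c : Fin (k+1) → Finset (Fin n) × Finset (Fin n)} {x : Fin n}
    {i : Fin (k+1)} (hsub : (c i).1 ⊆ (c i).2) : st c x i = 2 ↔ x ∉ (c i).2 := by
  constructor
  · intro h hx
    rw [st] at h
    by_cases h1 : x ∈ (c i).1
    · rw [if_pos h1] at h
      exact (by decide : (0 : Fin 3) ≠ 2) h
    · rw [if_neg h1, if_pos hx] at h
      exact (by decide : (1 : Fin 3) ≠ 2) h
  · intro hx
    rw [st, if_neg (fun h1 => hx (hsub h1)), if_neg hx]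

lemma st_eq_two_iff' {k : ℕ} {c : Fin (k+1) → Finset (Fin n) × Finset (Fin n)} {x : Fin n}
    {i : Fin (k+1)} (hsub : (c i).1 ⊆ (c i).2) : st c x i ≠ 2 ↔ x ∈ (c i).2 := by
  rw [ne_eq, st_eq_two_iff hsub, not_not]

lemma card_W {k : ℕ} (A B : Finset (Fin n)) (hAB : A ⊆ B) (T : Finset (Fin k)) :
    (W A B T).card = (V k T).card ^ (B \ A).card := by
  have key : (W A B T).card = (Fintype.piFinset (fun _ : ↥(B \ A) => V k T)).card := by
    apply Finset.card_bij' (i := fun c _ => fun (x : ↥(B \ A)) => st c (x : Fin n))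
      (j := fun g _ => fun i : Fin (k+1) =>
        ((A ∪ (B \ A).filter (fun y => ∀ h : y ∈ B \ A, g ⟨y, h⟩ i = 0)),
         (B \ (B \ A).filter (fun y => ∀ h : y ∈ B \ A, g ⟨y, h⟩ i = 2))))
    · -- fwd maps into piFinset
      intro c hc
      rw [W, mem_filter] at hc
      obtain ⟨-, h1, h2, h3, h4⟩ := hc
      rw [Fintype.mem_piFinset]
      intro x
      obtain ⟨hxB, hxA⟩ := mem_sdiff.1 x.2
      rw [mem_V]
      refine ⟨?_, ?_, ?_⟩
      · rw [st, h3]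
        dsimp only
        rw [if_neg hxA, if_pos hxB]
      · intro i j hij
        constructor
        · intro h0
          rw [st_eq_zero_iff] at h0 ⊢
          exact (h2 i j hij).1 h0
        · intro hne
          rw [st_eq_two_iff' (h1 i).2.1] at hne
          rw [st_eq_two_iff' (h1 j).2.1]
          exact (h2 i j hij).2 hne
      · intro u hu
        rw [st, st, h4 u hu]
    · -- bwd maps into W
      intro g hg
      rw [Fintype.mem_piFinset] at hg
      have hgV : ∀ (y : Fin n) (h : y ∈ B \ A), g ⟨y, h⟩ ∈ V k T := fun y h => hg _
      rw [W, mem_filter]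
      refine ⟨mem_univ _, ?_, ?_, ?_, ?_⟩
      · intro i
        refine ⟨subset_union_left, ?_, sdiff_subset⟩
        apply union_subset
        · intro y hy
          rw [mem_sdiff]
          refine ⟨hAB hy, ?_⟩
          intro hc
          exact (mem_sdiff.1 (mem_of_mem_filter y hc)).2 hy
        · intro y hy
          rw [mem_filter] at hy
          obtain ⟨hyD, hy0⟩ := hy
          rw [mem_sdiff]
          refine ⟨(mem_sdiff.1 hyD).1, ?_⟩
          intro hc
          rw [mem_filter] at hc
          have h0 := hy0 hyD
          have h2 := hc.2 hyD
          rw [h0] at h2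
          exact (by decide : (0 : Fin 3) ≠ 2) h2
      · intro i j hij
        constructor
        · apply union_subset_union_right
          intro y hy
          rw [mem_filter] at hy ⊢
          refine ⟨hy.1, fun h => ?_⟩
          have hV := mem_V.1 (hgV y h)
          exact (hV.2.1 i j hij).1 (hy.2 h)
        · apply sdiff_subset_sdiff le_rfl
          intro y hy
          rw [mem_filter] at hy ⊢
          refine ⟨hy.1, fun h => ?_⟩
          have hV := mem_V.1 (hgV y h)
          by_contra hne
          exact ((hV.2.1 i j hij).2 hne) (hy.2 h)
      · have e0 : (B \ A).filter (fun y => ∀ h : y ∈ B \ A, g ⟨y, h⟩ (Fin.last k) = 0) = ∅ := by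
          rw [filter_eq_empty_iff]
          intro y hy hc
          have hV := mem_V.1 (hgV y hy)
          have := hc hy
          rw [hV.1] at this
          exact (by decide : (1 : Fin 3) ≠ 0) this
        have e2 : (B \ A).filter (fun y => ∀ h : y ∈ B \ A, g ⟨y, h⟩ (Fin.last k) = 2) = ∅ := by
          rw [filter_eq_empty_iff]
          intro y hy hc
          have hV := mem_V.1 (hgV y hy)
          have := hc hy
          rw [hV.1] at this
          exact (by decide : (1 : Fin 3) ≠ 2) this
        dsimp only
        rw [e0, e2, union_empty, sdiff_empty]
      · intro u hu
        have hfe : ∀ (i j : Fin (k+1)), (∀ (y : Fin n) (h : y ∈ B \ A),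
            g ⟨y, h⟩ i = g ⟨y, h⟩ j) →
            ((A ∪ (B \ A).filter (fun y => ∀ h : y ∈ B \ A, g ⟨y, h⟩ i = 0)),
             (B \ (B \ A).filter (fun y => ∀ h : y ∈ B \ A, g ⟨y, h⟩ i = 2))) =
            ((A ∪ (B \ A).filter (fun y => ∀ h : y ∈ B \ A, g ⟨y, h⟩ j = 0)),
             (B \ (B \ A).filter (fun y => ∀ h : y ∈ B \ A, g ⟨y, h⟩ j = 2))) := by
          intro i j hij
          have f0 : (B \ A).filter (fun y => ∀ h : y ∈ B \ A, g ⟨y, h⟩ i = 0) =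
              (B \ A).filter (fun y => ∀ h : y ∈ B \ A, g ⟨y, h⟩ j = 0) := by
            apply filter_congr
            intro y hy
            constructor
            · intro hc h; rw [← hij y h]; exact hc h
            · intro hc h; rw [hij y h]; exact hc h
          have f2 : (B \ A).filter (fun y => ∀ h : y ∈ B \ A, g ⟨y, h⟩ i = 2) =
              (B \ A).filter (fun y => ∀ h : y ∈ B \ A, g ⟨y, h⟩ j = 2) := by
            apply filter_congr
            intro y hy
            constructor
            · intro hc h; rw [← hij y h]; exact hc h
            · intro hc h; rw [hij y h]; exact hc h
          rw [f0, f2]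
        apply hfe
        intro y h
        exact (mem_V.1 (hgV y h)).2.2 u hu
    · -- left inverse : bwd (fwd c) = c
      intro c hc
      rw [W, mem_filter] at hc
      obtain ⟨-, h1, h2, h3, h4⟩ := hc
      funext i
      have e1 : A ∪ (B \ A).filter (fun y => ∀ h : y ∈ B \ A, st c y i = 0) = (c i).1 := by
        ext y
        rw [mem_union, mem_filter]
        constructor
        · rintro (hy | ⟨hy, h0⟩)
          · exact (h1 i).1 hy
          · exact st_eq_zero_iff.1 (h0 hy)
        · intro hy
          by_cases hA : y ∈ A
          · exact Or.inl hA
          · right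
            have hyB : y ∈ B := (h1 i).2.2 ((h1 i).2.1 hy)
            exact ⟨mem_sdiff.2 ⟨hyB, hA⟩, fun _ => st_eq_zero_iff.2 hy⟩
      have e2 : B \ (B \ A).filter (fun y => ∀ h : y ∈ B \ A, st c y i = 2) = (c i).2 := by
        ext y
        rw [mem_sdiff, mem_filter]
        constructor
        · rintro ⟨hyB, hy⟩
          by_contra hc2
          have hyA : y ∉ A := fun hA => hc2 ((h1 i).2.1 ((h1 i).1 hA))
          exact hy ⟨mem_sdiff.2 ⟨hyB, hyA⟩, fun _ => (st_eq_two_iff (h1 i).2.1).2 hc2⟩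
        · intro hy
          refine ⟨(h1 i).2.2 hy, ?_⟩
          rintro ⟨hyD, hst⟩
          exact (st_eq_two_iff (h1 i).2.1).1 (hst hyD) hy
      exact Prod.ext e1 e2
    · -- right inverse : fwd (bwd g) = g
      intro g hg
      rw [Fintype.mem_piFinset] at hg
      funext x i
      obtain ⟨hxB, hxA⟩ := mem_sdiff.1 x.2
      have hx : (↑x : Fin n) ∈ B \ A := x.2
      have m1 : (↑x : Fin n) ∈ A ∪ (B \ A).filter
          (fun y => ∀ h : y ∈ B \ A, g ⟨y, h⟩ i = 0) ↔ g x i = 0 := by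
        rw [mem_union, mem_filter]
        constructor
        · rintro (h | ⟨-, h⟩)
          · exact absurd h hxA
          · have := h hx
            rwa [Subtype.coe_eta] at this
        · intro h
          right
          refine ⟨hx, fun h' => ?_⟩
          rw [Subtype.coe_eta]
          exact h
      have m2 : (↑x : Fin n) ∈ B \ (B \ A).filter
          (fun y => ∀ h : y ∈ B \ A, g ⟨y, h⟩ i = 2) ↔ g x i ≠ 2 := by
        rw [mem_sdiff, mem_filter]
        constructor
        · rintro ⟨-, h⟩ hc
          exact h ⟨hx, fun h' => by rw [Subtype.coe_eta]; exact hc⟩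
        · intro h
          refine ⟨hxB, ?_⟩
          rintro ⟨-, hc⟩
          have := hc hx
          rw [Subtype.coe_eta] at this
          exact h this
      rcases fin3_cases (g x i) with h | h | h
      · rw [st, if_pos (m1.2 h), h]
      · have n1 : (↑x : Fin n) ∉ A ∪ (B \ A).filter
            (fun y => ∀ h : y ∈ B \ A, g ⟨y, h⟩ i = 0) := by
          intro hc
          have := m1.1 hc
          rw [h] at this
          exact (by decide : (1 : Fin 3) ≠ 0) this
        have p2 : (↑x : Fin n) ∈ B \ (B \ A).filter
            (fun y => ∀ h : y ∈ B \ A, g ⟨y, h⟩ i = 2) := by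
          apply m2.2
          rw [h]
          decide
        rw [st, if_neg n1, if_pos p2, h]
      · have n1 : (↑x : Fin n) ∉ A ∪ (B \ A).filter
            (fun y => ∀ h : y ∈ B \ A, g ⟨y, h⟩ i = 0) := by
          intro hc
          have := m1.1 hc
          rw [h] at this
          exact (by decide : (2 : Fin 3) ≠ 0) this
        have n2 : (↑x : Fin n) ∉ B \ (B \ A).filter
            (fun y => ∀ h : y ∈ B \ A, g ⟨y, h⟩ i = 2) := by
          intro hc
          exact (m2.1 hc) h
        rw [st, if_neg n1, if_neg n2, h]
  rw [key, Fintype.card_piFinset]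
  rw [Finset.prod_const, card_univ, Fintype.card_coe]

lemma prod_ite_neg {k : ℕ} (q : Fin k → Prop) [DecidablePred q] :
    (∏ u : Fin k, if q u then (0 : ℤ) else 1) = if ∀ u, ¬ q u then 1 else 0 := by
  by_cases h : ∀ u, ¬ q u
  · rw [if_pos h]
    apply Finset.prod_eq_one
    intro u _
    rw [if_neg (h u)]
  · rw [if_neg h]
    push_neg at h
    obtain ⟨u, hu⟩ := h
    exact Finset.prod_eq_zero (mem_univ u) (if_pos hu)

lemma prod_ite_subset {k : ℕ} (q : Fin k → Prop) [DecidablePred q] (T : Finset (Fin k)) :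
    (∏ u ∈ T, if q u then (-1 : ℤ) else 0) = if ∀ u ∈ T, q u then (-1 : ℤ) ^ T.card else 0 := by
  by_cases h : ∀ u ∈ T, q u
  · rw [if_pos h, ← Finset.prod_const]
    apply Finset.prod_congr rfl
    intro u hu
    rw [if_pos (h u hu)]
  · rw [if_neg h]
    push_neg at h
    obtain ⟨u, hu, hqu⟩ := h
    exact Finset.prod_eq_zero hu (if_neg hqu)

lemma inclusion_exclusion {k : ℕ} (A B : Finset (Fin n)) :
    (((W A B (∅ : Finset (Fin k))).filter
        (fun c => ∀ u : Fin k, c u.castSucc ≠ c u.succ)).card : ℤ)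
      = ∑ T ∈ (univ : Finset (Fin k)).powerset,
          (-1 : ℤ) ^ T.card * ((W A B T).card : ℤ) := by
  rw [← Finset.sum_boole]
  have step1 : ∀ c : Fin (k+1) → Finset (Fin n) × Finset (Fin n),
      (if ∀ u : Fin k, c u.castSucc ≠ c u.succ then (1 : ℤ) else 0)
        = ∑ T ∈ (univ : Finset (Fin k)).powerset,
            ∏ u ∈ T, (if c u.castSucc = c u.succ then (-1 : ℤ) else 0) := by
    intro c
    have lhs_eq : (if ∀ u : Fin k, c u.castSucc ≠ c u.succ then (1 : ℤ) else 0)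
        = ∏ u : Fin k, ((if c u.castSucc = c u.succ then (-1 : ℤ) else 0) + 1) := by
      have : ∀ u : Fin k, (if c u.castSucc = c u.succ then (-1 : ℤ) else 0) + 1
          = if c u.castSucc = c u.succ then (0 : ℤ) else 1 := by
        intro u; split_ifs <;> ring
      simp_rw [this]
      rw [prod_ite_neg (fun u => c u.castSucc = c u.succ)]
    rw [lhs_eq, Finset.prod_add]
    apply Finset.sum_congr rfl
    intro T _
    rw [Finset.prod_const_one, mul_one]
  simp_rw [step1]
  rw [Finset.sum_comm]
  apply Finset.sum_congr rfl
  intro T _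
  have inner : ∀ c : Fin (k+1) → Finset (Fin n) × Finset (Fin n),
      (∏ u ∈ T, if c u.castSucc = c u.succ then (-1 : ℤ) else 0)
      = if ∀ u ∈ T, c u.castSucc = c u.succ then (-1 : ℤ) ^ T.card else 0 :=
    fun c => prod_ite_subset _ T
  simp_rw [inner]
  rw [← Finset.sum_filter, Finset.sum_const, nsmul_eq_mul]
  rw [mul_comm]
  congr 2
  rw [W, W, filter_filter]
  congr 1
  apply filter_congr
  intro c _
  unfold weakP
  simp only [notMem_empty, false_implies, implies_true, and_true]
  tauto

end IntervalChainAux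

/-- The number of chains of intervals of length `k` terminating at a fixed
interval `[A,B]` with `|B \ A| = α` equals `∑_{i=0}^{k} (-1)^i C(k,i) (1+2(k-i))^α`.
An interval contained in `[A,B]` is a pair `(A',B')` with `A ⊆ A' ⊆ B' ⊆ B`; intervals are
ordered by `(P,Q) ≤ (P',Q') ↔ P' ⊆ P ∧ Q ⊆ Q'`, and a chain of length `k` terminating at
`[A,B]` is a strictly increasing sequence of `k+1` intervals ending at `(A,B)`. -/
theorem interval_chain_count (n k α : ℕ) (A B : Finset (Fin n)) (hAB : A ⊆ B)
    (hα : (B \ A).card = α) :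
    (((Finset.univ : Finset (Fin (k + 1) → Finset (Fin n) × Finset (Fin n))).filter
        (fun c =>
          (∀ i, A ⊆ (c i).1 ∧ (c i).1 ⊆ (c i).2 ∧ (c i).2 ⊆ B) ∧
          (∀ i j : Fin (k + 1), i < j →
            (c j).1 ⊆ (c i).1 ∧ (c i).2 ⊆ (c j).2 ∧ c i ≠ c j) ∧
          c (Fin.last k) = (A, B))).card : ℤ)
      = ∑ i ∈ Finset.range (k + 1),
          (-1 : ℤ) ^ i * (k.choose i) * (1 + 2 * ((k - i : ℕ) : ℤ)) ^ α := by
  have hset : ((Finset.univ : Finset (Fin (k + 1) → Finset (Fin n) × Finset (Fin n))).filter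
        (fun c =>
          (∀ i, A ⊆ (c i).1 ∧ (c i).1 ⊆ (c i).2 ∧ (c i).2 ⊆ B) ∧
          (∀ i j : Fin (k + 1), i < j →
            (c j).1 ⊆ (c i).1 ∧ (c i).2 ⊆ (c j).2 ∧ c i ≠ c j) ∧
          c (Fin.last k) = (A, B)))
      = (IntervalChainAux.W A B (∅ : Finset (Fin k))).filter
          (fun c => ∀ u : Fin k, c u.castSucc ≠ c u.succ) := by
    rw [IntervalChainAux.W, filter_filter]
    apply filter_congr
    intro c _
    constructor
    · rintro ⟨h1, h2, h3⟩
      refine ⟨⟨h1, ?_, h3, by simp⟩, ?_⟩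
      · intro i j hij
        rcases eq_or_lt_of_le hij with rfl | hlt
        · exact ⟨subset_rfl, subset_rfl⟩
        · exact ⟨(h2 i j hlt).1, (h2 i j hlt).2.1⟩
      · intro u hc
        exact (h2 u.castSucc u.succ u.castSucc_lt_succ).2.2 hc
    · rintro ⟨⟨h1, h2, h3, -⟩, h4⟩
      refine ⟨h1, ?_, h3⟩
      intro i j hij
      refine ⟨(h2 i j hij.le).1, (h2 i j hij.le).2, ?_⟩
      intro hc
      have hvk : (i : ℕ) < k := by
        have hj := j.isLt
        rw [Fin.lt_def] at hij
        omega
      set u : Fin k := ⟨(i : ℕ), hvk⟩ with hu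
      apply h4 u
      have hcast : u.castSucc = i := by
        apply Fin.ext
        rfl
      have hsucc : u.succ ≤ j := by
        rw [Fin.le_def]
        show (i : ℕ) + 1 ≤ (j : ℕ)
        rw [Fin.lt_def] at hij
        omega
      apply Prod.ext
      · apply Subset.antisymm
        · rw [hcast]
          calc (c i).1 = (c j).1 := by rw [hc]
          _ ⊆ (c u.succ).1 := (h2 u.succ j hsucc).1
        · exact (h2 u.castSucc u.succ (Fin.castSucc_le_succ u)).1
      · apply Subset.antisymm
        · exact (h2 u.castSucc u.succ (Fin.castSucc_le_succ u)).2
        · rw [hcast]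
          calc (c u.succ).2 ⊆ (c j).2 := (h2 u.succ j hsucc).2
          _ = (c i).2 := by rw [hc]
  rw [hset, IntervalChainAux.inclusion_exclusion A B]
  have hW : ∀ T : Finset (Fin k), ((IntervalChainAux.W A B T).card : ℤ)
      = (((1 + 2 * (k - T.card) : ℕ)) : ℤ) ^ α := by
    intro T
    rw [IntervalChainAux.card_W A B hAB T, IntervalChainAux.card_V T, hα]
    push_cast
    ring
  simp_rw [hW]
  rw [Finset.powerset_card_disjiUnion]
  erw [Finset.sum_disjiUnion]
  apply Finset.sum_congr
  · congr 1
    rw [Finset.card_fin]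
  · intro i hi
    have hconst : ∀ T ∈ Finset.powersetCard i (univ : Finset (Fin k)),
        (-1 : ℤ) ^ T.card * (((1 + 2 * (k - T.card) : ℕ)) : ℤ) ^ α
          = (-1 : ℤ) ^ i * (((1 + 2 * (k - i) : ℕ)) : ℤ) ^ α := by
      intro T hT
      rw [(Finset.mem_powersetCard.1 hT).2]
    rw [Finset.sum_congr rfl hconst, Finset.sum_const, Finset.card_powersetCard,
      Finset.card_fin, nsmul_eq_mul]
    push_cast
    ring
end

section
/- The numbers Q_k^α = Σ_{i=0}^{k} (-1)^i C(k,i)(1+2(k-i))^α satisfy the recurrence Q_k^α = Σ_{i=0}^{α} C(α,i) [Σ_{j=0}^{α-i} C(α-i,j) Q_{k-1}^j] − Q_{k-1}^α for k ≥ 1. -/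
/-- `Q k α = ∑_{i=0}^{k} (-1)^i C(k,i) (1+2(k-i))^α`. -/
def Q (k α : ℕ) : ℤ :=
  ∑ i ∈ Finset.range (k + 1), (-1 : ℤ) ^ i * (k.choose i) * (1 + 2 * ((k - i : ℕ) : ℤ)) ^ α

lemma polyA (α : ℕ) (x : ℤ) :
    ∑ i ∈ Finset.range (α + 1), (α.choose i : ℤ) *
      ∑ j ∈ Finset.range (α - i + 1), ((α - i).choose j : ℤ) * x ^ j = (x + 2) ^ α := by
  have h1 : ∀ i ∈ Finset.range (α + 1),
      (α.choose i : ℤ) * ∑ j ∈ Finset.range (α - i + 1), ((α - i).choose j : ℤ) * x ^ j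
        = (α.choose i : ℤ) * (x + 1) ^ (α - i) := by
    intro i _
    congr 1
    rw [add_pow]
    exact Finset.sum_congr rfl fun j _ => by ring
  rw [Finset.sum_congr rfl h1, show (x + 2 : ℤ) = 1 + (x + 1) by ring, add_pow]
  exact Finset.sum_congr rfl fun i _ => by ring

lemma polyB (α : ℕ) (s : Finset ℕ) (c x : ℕ → ℤ) :
    ∑ i ∈ Finset.range (α + 1), (α.choose i : ℤ) *
      ∑ j ∈ Finset.range (α - i + 1), ((α - i).choose j : ℤ) * ∑ m ∈ s, c m * x m ^ j
    = ∑ m ∈ s, c m * (x m + 2) ^ α := by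
  have h : ∀ m ∈ s, c m * (x m + 2) ^ α
      = ∑ i ∈ Finset.range (α + 1), ∑ j ∈ Finset.range (α - i + 1),
          c m * ((α.choose i : ℤ) * (((α - i).choose j : ℤ) * x m ^ j)) := by
    intro m _
    rw [← polyA α (x m), Finset.mul_sum]
    exact Finset.sum_congr rfl fun i _ => by rw [Finset.mul_sum, Finset.mul_sum]
  rw [Finset.sum_congr rfl h, Finset.sum_comm]
  refine Finset.sum_congr rfl fun i _ => ?_
  rw [Finset.mul_sum, Finset.sum_comm]
  refine Finset.sum_congr rfl fun j _ => ?_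
  rw [Finset.mul_sum, Finset.mul_sum]
  exact Finset.sum_congr rfl fun m _ => by ring

lemma pascalQ (n α : ℕ) :
    Q (n + 1) α =
      (∑ m ∈ Finset.range (n + 1), (-1 : ℤ) ^ m * (n.choose m) *
        ((1 + 2 * ((n - m : ℕ) : ℤ)) + 2) ^ α) - Q n α := by
  unfold Q
  rw [Finset.sum_range_succ' _ (n + 1)]
  have h1 : ∀ i ∈ Finset.range (n + 1),
      (-1 : ℤ) ^ (i + 1) * ((n + 1).choose (i + 1)) * (1 + 2 * ((n + 1 - (i + 1) : ℕ) : ℤ)) ^ α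
        = -((-1 : ℤ) ^ i * (n.choose i) * (1 + 2 * ((n - i : ℕ) : ℤ)) ^ α)
          - (-1 : ℤ) ^ i * (n.choose (i + 1)) * (1 + 2 * ((n - i : ℕ) : ℤ)) ^ α := by
    intro i _
    rw [Nat.succ_sub_succ, Nat.choose_succ_succ]
    push_cast
    ring
  rw [Finset.sum_congr rfl h1]
  have h2 : (∑ m ∈ Finset.range (n + 1), (-1 : ℤ) ^ m * (n.choose m) *
        ((1 + 2 * ((n - m : ℕ) : ℤ)) + 2) ^ α)
      = (-1 : ℤ) ^ 0 * (((n + 1).choose 0 : ℕ) : ℤ) * (1 + 2 * ((n + 1 - 0 : ℕ) : ℤ)) ^ α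
        - ∑ i ∈ Finset.range (n + 1),
            (-1 : ℤ) ^ i * (n.choose (i + 1)) * (1 + 2 * ((n - i : ℕ) : ℤ)) ^ α := by
    rw [Finset.sum_range_succ' _ n, Finset.sum_range_succ _ n]
    have h3 : ∀ i ∈ Finset.range n,
        (-1 : ℤ) ^ (i + 1) * (n.choose (i + 1)) * ((1 + 2 * ((n - (i + 1) : ℕ) : ℤ)) + 2) ^ α
          = -((-1 : ℤ) ^ i * (n.choose (i + 1)) * (1 + 2 * ((n - i : ℕ) : ℤ)) ^ α) := by
      intro i hi
      simp only [Finset.mem_range] at hi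
      have e1 : ((n - (i + 1) : ℕ) : ℤ) = (n : ℤ) - i - 1 := by
        have : i + 1 ≤ n := hi
        push_cast [Nat.cast_sub this]; ring
      have e2 : ((n - i : ℕ) : ℤ) = (n : ℤ) - i := by
        have : i ≤ n := hi.le
        push_cast [Nat.cast_sub this]; ring
      rw [e1, e2]
      have : (1 + 2 * ((n : ℤ) - i - 1)) + 2 = 1 + 2 * ((n : ℤ) - i) := by ring
      rw [this]
      ring
    rw [Finset.sum_congr rfl h3]
    simp only [Nat.choose_succ_self, Nat.cast_zero, Nat.sub_zero, Nat.choose_zero_right,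
      Nat.cast_one, pow_zero, Nat.sub_self, Nat.cast_zero]
    push_cast
    rw [Finset.sum_neg_distrib]
    ring
  rw [h2, Finset.sum_sub_distrib, Finset.sum_neg_distrib]
  ring

/-- the numbers `Q k α` satisfy the recurrence
`Q_k^α = ∑_{i=0}^{α} C(α,i) [∑_{j=0}^{α-i} C(α-i,j) Q_{k-1}^j] − Q_{k-1}^α` for `k ≥ 1`. -/
theorem Q_recurrence (k α : ℕ) (hk : 1 ≤ k) :
    Q k α =
      (∑ i ∈ Finset.range (α + 1), (α.choose i : ℤ) *
        ∑ j ∈ Finset.range (α - i + 1), ((α - i).choose j : ℤ) * Q (k - 1) j)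
      - Q (k - 1) α := by
  obtain ⟨n, rfl⟩ : ∃ n, k = n + 1 := ⟨k - 1, (Nat.succ_pred_eq_of_pos hk).symm⟩
  simp only [Nat.add_sub_cancel]
  have hQ : ∀ j, Q n j = ∑ m ∈ Finset.range (n + 1),
      ((-1 : ℤ) ^ m * (n.choose m)) * (1 + 2 * ((n - m : ℕ) : ℤ)) ^ j := fun j => rfl
  calc Q (n + 1) α
      = (∑ m ∈ Finset.range (n + 1), ((-1 : ℤ) ^ m * (n.choose m)) *
          ((1 + 2 * ((n - m : ℕ) : ℤ)) + 2) ^ α) - Q n α := by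
        rw [pascalQ]
    _ = (∑ i ∈ Finset.range (α + 1), (α.choose i : ℤ) *
          ∑ j ∈ Finset.range (α - i + 1), ((α - i).choose j : ℤ) * Q n j) - Q n α := by
        rw [← polyB α (Finset.range (n + 1)) (fun m => (-1 : ℤ) ^ m * (n.choose m))
          (fun m => 1 + 2 * ((n - m : ℕ) : ℤ))]
        simp only [← hQ]
end

section
/- Define b_{r,l} = Σ_{j=0}^{r−1} (−1)^j C(r−1,j)[(2r−2j)^l − (2r−2j−1)^l] for r ≥ 1. Then for all 1 ≤ r and 1 ≤ l, the recurrence Σ_{i=1}^{l} 2^i C(l,i) b_{r,l−i} = b_{r+1,l} holds. -/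
/-- Binomial helper: `∑_{i=1}^{l} 2^i C(l,i) x^{l-i} = (x+2)^l - x^l`. -/
lemma binom_aux (x : ℤ) (l : ℕ) :
    ∑ i ∈ Finset.Icc 1 l, (2:ℤ)^i * (l.choose i) * x^(l-i) = (x+2)^l - x^l := by
  have h := add_pow (2:ℤ) x l
  rw [Finset.sum_range_succ'] at h
  have hIcc : Finset.Icc 1 l = Finset.Ico 1 (l+1) := by rw [Finset.Ico_add_one_right_eq_Icc]
  rw [hIcc, Finset.sum_Ico_eq_sum_range]
  simp only [Nat.add_sub_cancel] at *
  simp only [pow_zero, Nat.sub_zero, Nat.choose_zero_right, Nat.cast_one, mul_one, one_mul] at h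
  have h2 : (x+2)^l = (2+x)^l := by ring
  rw [h2, h, add_sub_cancel_right]
  refine Finset.sum_congr rfl fun i _ => ?_
  rw [add_comm 1 i]
  ring

/-- Pascal-rule summation: alternating sums against `C(s+1,·)` turn into
finite differences against `C(s,·)`. -/
lemma pascal_sum (s : ℕ) (g : ℕ → ℤ) :
    ∑ j ∈ Finset.range (s+2), (-1:ℤ)^j * ((s+1).choose j) * g j
      = ∑ j ∈ Finset.range (s+1), (-1:ℤ)^j * (s.choose j) * (g j - g (j+1)) := by
  have h0 : ∑ j ∈ Finset.range (s+2), (-1:ℤ)^j * (s.choose j) * g j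
      = ∑ j ∈ Finset.range (s+1), (-1:ℤ)^j * (s.choose j) * g j := by
    rw [Finset.sum_range_succ, Nat.choose_succ_self]
    push_cast; ring
  rw [Finset.sum_range_succ' (fun j => (-1:ℤ)^j * ((s+1).choose j) * g j) (s+1)]
  rw [Finset.sum_range_succ' (fun j => (-1:ℤ)^j * (s.choose j) * g j) (s+1)] at h0
  have key : ∑ j ∈ Finset.range (s+1), (-1:ℤ)^(j+1) * (((s+1).choose (j+1) : ℕ) : ℤ) * g (j+1)
      = (∑ j ∈ Finset.range (s+1), (-1:ℤ)^(j+1) * (s.choose (j+1)) * g (j+1))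
        - ∑ j ∈ Finset.range (s+1), (-1:ℤ)^j * (s.choose j) * g (j+1) := by
    rw [← Finset.sum_sub_distrib]
    refine Finset.sum_congr rfl fun j _ => ?_
    rw [Nat.choose_succ_succ]
    push_cast; ring
  simp only [pow_zero, Nat.choose_zero_right, Nat.cast_one, one_mul, mul_one] at h0 ⊢
  rw [key]
  simp only [mul_sub, Finset.sum_sub_distrib]
  linarith [h0]

/-- Entries of the `f`-vector transformation matrix of the interval subdivision:
`b_{r,l} = ∑_{j=0}^{r−1} (−1)^j C(r−1,j)[(2r−2j)^l − (2r−2j−1)^l]` for `r ≥ 1`. -/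
def bEntry (r l : ℕ) : ℤ :=
  ∑ j ∈ Finset.range r, (-1 : ℤ) ^ j * ((r - 1).choose j) *
    ((2 * ((r - j : ℕ) : ℤ)) ^ l - (2 * ((r - j : ℕ) : ℤ) - 1) ^ l)

/-- for all `r ≥ 1` and `l ≥ 1`,
`∑_{i=1}^{l} 2^i C(l,i) b_{r,l−i} = b_{r+1,l}`. -/
theorem bEntry_recurrence (r l : ℕ) (hr : 1 ≤ r) (hl : 1 ≤ l) :
    ∑ i ∈ Finset.Icc 1 l, (2 : ℤ) ^ i * (l.choose i) * bEntry r (l - i)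
      = bEntry (r + 1) l := by
  obtain ⟨s, rfl⟩ : ∃ s, r = s + 1 := ⟨r - 1, (Nat.succ_pred_eq_of_pos hr).symm⟩
  set g : ℕ → ℤ := fun j =>
    (2 * ((s:ℤ) + 2 - j)) ^ l - (2 * ((s:ℤ) + 2 - j) - 1) ^ l with hg
  have rhs_eq : bEntry (s + 1 + 1) l
      = ∑ j ∈ Finset.range (s+1), (-1:ℤ)^j * (s.choose j) * (g j - g (j+1)) := by
    rw [← pascal_sum s g]
    unfold bEntry
    refine Finset.sum_congr rfl fun j hj => ?_
    have hj' : j < s + 2 := Finset.mem_range.mp hj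
    have hc : ((s + 1 + 1 - j : ℕ) : ℤ) = (s:ℤ) + 2 - j := by
      rw [Nat.cast_sub hj'.le]; push_cast; ring
    simp only [hg, Nat.add_sub_cancel, hc]
  rw [rhs_eq]
  unfold bEntry
  simp only [Finset.mul_sum]
  rw [Finset.sum_comm]
  refine Finset.sum_congr rfl fun j hj => ?_
  have hj' : j < s + 1 := Finset.mem_range.mp hj
  have hc : ((s + 1 - j : ℕ) : ℤ) = (s:ℤ) + 1 - j := by
    rw [Nat.cast_sub hj'.le]; push_cast; ring
  simp only [Nat.add_sub_cancel, hc]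
  set x : ℤ := 2 * ((s:ℤ) + 1 - j) with hx
  have hb1 := binom_aux x l
  have hb2 := binom_aux (x - 1) l
  have hgj : g j - g (j+1) = ((x+2)^l - x^l) - (((x-1)+2)^l - (x-1)^l) := by
    simp only [hg, hx]; push_cast; ring_nf
  rw [hgj, ← hb1, ← hb2, mul_sub, Finset.mul_sum, Finset.mul_sum, ← Finset.sum_sub_distrib]
  refine Finset.sum_congr rfl fun i _ => by ring
end

section
/- For d ≥ 1, 1 ≤ s ≤ d, and 0 ≤ r ≤ d−1, the symmetry B^+(d,s,r) = B^+(d, d−s+1, d−r−1) holds, where B^+(d,s,r) counts signed permutations σ ∈ B_d with σ_1 = s, σ_d > 0, and exactly r type-B descents. -/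
/-- The signed value at position `i` of `f : Fin d → Fin d × Bool`. -/
def BVal (d : ℕ) (f : Fin d → Fin d × Bool) (i : Fin d) : ℤ :=
  if (f i).2 then ((f i).1 : ℤ) + 1 else -(((f i).1 : ℤ) + 1)

/-- `σ_{k+1}` in one-line notation (`k` is `0`-based); `0` out of range. -/
def sval (d : ℕ) (f : Fin d → Fin d × Bool) (k : ℕ) : ℤ :=
  if h : k < d then BVal d f ⟨k, h⟩ else 0

/-- `f` encodes a signed permutation of `{1,…,d}`. -/
def IsSignedPerm (d : ℕ) (f : Fin d → Fin d × Bool) : Prop :=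
  Function.Injective fun i => (f i).1

instance (d : ℕ) (f : Fin d → Fin d × Bool) : Decidable (IsSignedPerm d f) := by
  unfold IsSignedPerm; infer_instance

/-- The type-B descent number: `|{i ∈ [0,d−1] : σ_i > σ_{i+1}}|` with `σ_0 = 0`. -/
def desB (d : ℕ) (f : Fin d → Fin d × Bool) : ℕ :=
  ((Finset.range d).filter fun i =>
    sval d f i < if i = 0 then (0 : ℤ) else sval d f (i - 1)).card

/-- Signed permutations with `σ_1 = j` and `σ_d > 0`. -/
def BplusSet (d : ℕ) (j : ℤ) : Finset (Fin d → Fin d × Bool) :=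
  Finset.univ.filter fun f => IsSignedPerm d f ∧ sval d f 0 = j ∧ 0 < sval d f (d - 1)

/-- Signed permutations with `σ_1 = j` and `σ_d < 0`. -/
def BminusSet (d : ℕ) (j : ℤ) : Finset (Fin d → Fin d × Bool) :=
  Finset.univ.filter fun f => IsSignedPerm d f ∧ sval d f 0 = j ∧ sval d f (d - 1) < 0

/-- The "bar" involution on signed permutations. -/
def barMap (d : ℕ) (f : Fin d → Fin d × Bool) : Fin d → Fin d × Bool :=
  fun i => ((f i).1.rev, (f i).2)

lemma barMap_barMap (d : ℕ) (f : Fin d → Fin d × Bool) :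
    barMap d (barMap d f) = f := by
  funext i; simp [barMap]

lemma isSignedPerm_barMap (d : ℕ) (f : Fin d → Fin d × Bool)
    (hf : IsSignedPerm d f) : IsSignedPerm d (barMap d f) := by
  intro i j h
  apply hf
  simpa [barMap, Fin.rev_inj] using h

lemma bval_pos_iff (d : ℕ) (f : Fin d → Fin d × Bool) (i : Fin d) :
    0 < BVal d f i ↔ (f i).2 = true := by
  unfold BVal
  rcases h : (f i).2 <;> simp <;> omega

lemma bval_barMap (d : ℕ) (f : Fin d → Fin d × Bool) (i : Fin d) :
    BVal d (barMap d f) i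
      = (if (f i).2 then ((d : ℤ) + 1) else -((d : ℤ) + 1)) - BVal d f i := by
  have h1 : ((f i).1.rev : ℕ) = d - ((f i).1 + 1) := Fin.val_rev _
  have h2 : ((f i).1 : ℕ) < d := (f i).1.isLt
  have hcast : (((f i).1.rev : Fin d) : ℤ) = (d : ℤ) - ((f i).1 : ℤ) - 1 := by
    have h3 : (((f i).1.rev : Fin d) : ℤ) = ((((f i).1.rev : Fin d) : ℕ) : ℤ) := rfl
    rw [h3, h1]
    omega
  simp only [BVal, barMap]
  by_cases h : (f i).2 = true <;>
    simp only [h, if_true, Bool.false_eq_true, if_false, ↓reduceIte] <;> rw [hcast] <;> ring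

lemma bval_barMap_pos (d : ℕ) (f : Fin d → Fin d × Bool) (i : Fin d) :
    (0 < BVal d (barMap d f) i ↔ 0 < BVal d f i) := by
  rw [bval_pos_iff, bval_pos_iff]
  simp [barMap]

/-- Pointwise descent identity for the bar map. -/
lemma cmp_barMap (d : ℕ) (f : Fin d → Fin d × Bool) (i j : Fin d)
    (hne : (f i).1 ≠ (f j).1) :
    ((if BVal d f j < BVal d f i then (1 : ℤ) else 0)
      + (if BVal d (barMap d f) j < BVal d (barMap d f) i then (1 : ℤ) else 0))
      = 1 + (if 0 < BVal d f i then (1 : ℤ) else 0)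
          - (if 0 < BVal d f j then (1 : ℤ) else 0) := by
  have hi := bval_barMap d f i
  have hj := bval_barMap d f j
  have hvi : (1 : ℤ) ≤ ((f i).1 : ℤ) + 1 ∧ ((f i).1 : ℤ) + 1 ≤ d := by
    have := (f i).1.isLt; constructor <;> [omega; exact_mod_cast this]
  have hvj : (1 : ℤ) ≤ ((f j).1 : ℤ) + 1 ∧ ((f j).1 : ℤ) + 1 ≤ d := by
    have := (f j).1.isLt; constructor <;> [omega; exact_mod_cast this]
  have hvne : ((f i).1 : ℤ) ≠ ((f j).1 : ℤ) := by
    exact_mod_cast fun h => hne (Fin.val_injective (by exact_mod_cast h))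
  unfold BVal at *
  rcases h1 : (f i).2 <;> rcases h2 : (f j).2 <;>
    simp only [h1, h2, if_true, if_false, Bool.false_eq_true] at hi hj ⊢ <;>
    rw [hi, hj] <;>
    split_ifs <;> omega

lemma desB_cast (d : ℕ) (f : Fin d → Fin d × Bool) :
    (desB d f : ℤ) = ∑ i ∈ Finset.range d,
      (if sval d f i < (if i = 0 then (0 : ℤ) else sval d f (i - 1)) then (1 : ℤ) else 0) := by
  rw [desB, Finset.card_filter]
  push_cast
  rfl

lemma desB_add_barMap (d : ℕ) (f : Fin d → Fin d × Bool) (hd : 1 ≤ d)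
    (hf : IsSignedPerm d f) (h0 : 0 < sval d f 0) (hl : 0 < sval d f (d - 1)) :
    (desB d f : ℤ) + (desB d (barMap d f) : ℤ) = (d : ℤ) - 1 := by
  set g : ℕ → ℤ := fun i => if 0 < sval d f i then 1 else 0 with hg
  rw [desB_cast, desB_cast, ← Finset.sum_add_distrib]
  have hrange : Finset.range d = Finset.Ico 0 d := by rw [Finset.range_eq_Ico]
  rw [hrange, Finset.sum_eq_sum_Ico_succ_bot (by omega : 0 < d)]
  have h0' : 0 < sval d (barMap d f) 0 := by
    have h0d : 0 < d := hd
    rw [sval, dif_pos h0d] at h0 ⊢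
    exact (bval_barMap_pos d f ⟨0, h0d⟩).2 h0
  have hA : ¬ (sval d f 0 < (if (0:ℕ) = 0 then (0:ℤ) else sval d f (0 - 1))) := by
    rw [if_pos rfl]; omega
  have hB : ¬ (sval d (barMap d f) 0
      < (if (0:ℕ) = 0 then (0:ℤ) else sval d (barMap d f) (0 - 1))) := by
    rw [if_pos rfl]; omega
  have hterm0 : (if sval d f 0 < (if (0:ℕ) = 0 then (0:ℤ) else sval d f (0 - 1)) then (1:ℤ) else 0)
      + (if sval d (barMap d f) 0 < (if (0:ℕ) = 0 then (0:ℤ) else sval d (barMap d f) (0 - 1))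
          then (1:ℤ) else 0) = 0 := by
    rw [if_neg hA, if_neg hB]
    ring
  rw [hterm0, zero_add]
  have hmid : ∀ i ∈ Finset.Ico 1 d,
      (if sval d f i < (if i = 0 then (0:ℤ) else sval d f (i - 1)) then (1:ℤ) else 0)
        + (if sval d (barMap d f) i < (if i = 0 then (0:ℤ) else sval d (barMap d f) (i - 1))
            then (1:ℤ) else 0)
      = 1 + g (i - 1) - g i := by
    intro i hi
    rw [Finset.mem_Ico] at hi
    obtain ⟨h1, h2⟩ := hi
    have hi0 : i ≠ 0 := by omega
    have hlt : i < d := h2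
    have hlt' : i - 1 < d := by omega
    rw [if_neg hi0, if_neg hi0]
    have hsv : sval d f i = BVal d f ⟨i, hlt⟩ := by rw [sval, dif_pos hlt]
    have hsv' : sval d f (i - 1) = BVal d f ⟨i - 1, hlt'⟩ := by rw [sval, dif_pos hlt']
    have hsvb : sval d (barMap d f) i = BVal d (barMap d f) ⟨i, hlt⟩ := by
      rw [sval, dif_pos hlt]
    have hsvb' : sval d (barMap d f) (i - 1) = BVal d (barMap d f) ⟨i - 1, hlt'⟩ := by
      rw [sval, dif_pos hlt']
    have hne : (f ⟨i - 1, hlt'⟩).1 ≠ (f ⟨i, hlt⟩).1 := by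
      intro h
      have := hf h
      simp only [Fin.mk.injEq] at this
      omega
    have key := cmp_barMap d f ⟨i - 1, hlt'⟩ ⟨i, hlt⟩ hne
    rw [hg]
    simp only [hsv, hsv', hsvb, hsvb']
    rw [key]
  rw [Finset.sum_congr rfl hmid]
  have htel : ∑ i ∈ Finset.Ico 1 d, (1 + g (i - 1) - g i) = ((d : ℤ) - 1) + g 0 - g (d - 1) := by
    rw [Finset.sum_Ico_eq_sum_range]
    have : ∀ j ∈ Finset.range (d - 1), (1 + g (1 + j - 1) - g (1 + j)) = 1 + (g j - g (j + 1)) := by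
      intro j _
      have e1 : 1 + j - 1 = j := by omega
      have e2 : 1 + j = j + 1 := by omega
      rw [e1, e2]; ring
    rw [Finset.sum_congr rfl this, Finset.sum_add_distrib, Finset.sum_const,
      Finset.sum_range_sub' g, Finset.card_range, nsmul_eq_mul, mul_one]
    have hcd : ((d - 1 : ℕ) : ℤ) = (d : ℤ) - 1 := by omega
    rw [hcd]
    ring
  rw [htel]
  have hg0 : g 0 = 1 := by rw [hg]; simp only [if_pos h0]
  have hgl : g (d - 1) = 1 := by rw [hg]; simp only [if_pos hl]
  rw [hg0, hgl]
  ring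

lemma sval_barMap_zero (d : ℕ) (f : Fin d → Fin d × Bool) (hd : 1 ≤ d)
    (h0 : 0 < sval d f 0) :
    sval d (barMap d f) 0 = (d : ℤ) + 1 - sval d f 0 := by
  have h0d : 0 < d := hd
  rw [sval, dif_pos h0d] at h0 ⊢
  rw [sval, dif_pos h0d]
  rw [bval_barMap]
  have : (f ⟨0, h0d⟩).2 = true := (bval_pos_iff d f _).1 h0
  rw [if_pos this]

lemma mem_side (d s r : ℕ) (hd : 1 ≤ d) (hs : 1 ≤ s) (hsd : s ≤ d) (hr : r ≤ d - 1)
    (f : Fin d → Fin d × Bool)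
    (hf : f ∈ (BplusSet d (s : ℤ)).filter (fun f => desB d f = r)) :
    barMap d f ∈ (BplusSet d ((d - s + 1 : ℕ) : ℤ)).filter (fun f => desB d f = d - r - 1) := by
  rw [Finset.mem_filter, BplusSet, Finset.mem_filter] at hf ⊢
  obtain ⟨⟨-, hperm, hs0, hpos⟩, hdes⟩ := hf
  have h0 : 0 < sval d f 0 := by rw [hs0]; exact_mod_cast hs
  refine ⟨⟨Finset.mem_univ _, isSignedPerm_barMap d f hperm, ?_, ?_⟩, ?_⟩
  · rw [sval_barMap_zero d f hd h0, hs0]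
    push_cast [Nat.sub_add_cancel hsd, hsd]
    omega
  · have hlt : d - 1 < d := by omega
    rw [sval, dif_pos hlt] at hpos ⊢
    exact (bval_barMap_pos d f _).2 hpos
  · have := desB_add_barMap d f hd hperm h0 hpos
    omega

/-- for `d ≥ 1`, `1 ≤ s ≤ d` and `0 ≤ r ≤ d−1`, the symmetry
`B^+(d,s,r) = B^+(d, d−s+1, d−r−1)` holds, where `B^+(d,s,r)` counts signed
permutations `σ ∈ B_d` with `σ_1 = s`, `σ_d > 0` and exactly `r` type-B descents. -/
theorem Bplus_symmetry (d s r : ℕ) (hd : 1 ≤ d) (hs : 1 ≤ s) (hsd : s ≤ d)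
    (hr : r ≤ d - 1) :
    ((BplusSet d (s : ℤ)).filter (fun f => desB d f = r)).card
      = ((BplusSet d ((d - s + 1 : ℕ) : ℤ)).filter (fun f => desB d f = d - r - 1)).card := by
  apply Finset.card_nbij' (barMap d) (barMap d)
  · intro f hf
    exact mem_side d s r hd hs hsd hr f hf
  · intro f hf
    have hs' : 1 ≤ d - s + 1 := by omega
    have hsd' : d - s + 1 ≤ d := by omega
    have hr' : d - r - 1 ≤ d - 1 := by omega
    have := mem_side d (d - s + 1) (d - r - 1) hd hs' hsd' hr' f hf
    have e1 : d - (d - s + 1) + 1 = s := by omega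
    have e2 : d - (d - r - 1) - 1 = r := by omega
    rwa [e1, e2] at this
  · intro f _; exact barMap_barMap d f
  · intro f _; exact barMap_barMap d f
end

section
/- For d ≥ 2 and 1 ≤ s ≤ d, the polynomials B^+_{d,s}(t) satisfy the recurrence B^+_{d,s}(t) = t·Σ_{j=1}^{s−1} B^+_{d−1,j}(t) + Σ_{j=s}^{d−1} B^+_{d−1,j}(t) + Σ_{j=1}^{d−1} B^+_{d−1,−j}(t), with initial conditions B^+_{1,1}(t) = 1 and B^+_{1,−1}(t) = 0. -/
open Polynomial

/-- The `j`-Eulerian polynomial of type `B^+`: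
`B^+_{d,j}(t) = ∑_{σ ∈ B_d, σ_1=j, σ_d>0} t^{des_B(σ)}`. -/
noncomputable def BplusPoly (d : ℕ) (j : ℤ) : Polynomial ℝ :=
  ∑ f ∈ BplusSet d j, X ^ desB d f

/-- The `j`-Eulerian polynomial of type `B^-`:
`B^−_{d,j}(t) = ∑_{σ ∈ B_d, σ_1=j, σ_d<0} t^{des_B(σ)}`. -/
noncomputable def BminusPoly (d : ℕ) (j : ℤ) : Polynomial ℝ :=
  ∑ f ∈ BminusSet d j, X ^ desB d f

/-- The `j`-Eulerian polynomial of type `B`: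
`B_{d,j}(t) = ∑_{σ ∈ B_d, σ_1=j} t^{des_B(σ)}`. -/
noncomputable def BPoly (d : ℕ) (j : ℤ) : Polynomial ℝ :=
  ∑ f ∈ Finset.univ.filter (fun f : Fin d → Fin d × Bool =>
      IsSignedPerm d f ∧ sval d f 0 = j), X ^ desB d f

namespace BRec
open Polynomial

def uu (p a : ℕ) : ℕ := if a < p then a else a + 1
def rr (p a : ℕ) : ℕ := if a < p then a else a - 1

lemma uu_lt_iff (p a b : ℕ) : uu p a < uu p b ↔ a < b := by
  unfold uu; split_ifs <;> omega

lemma uu_ne (p a : ℕ) : uu p a ≠ p := by unfold uu; split_ifs <;> omega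

lemma uu_lt_p_iff (p a : ℕ) : uu p a < p ↔ a < p := by unfold uu; split_ifs <;> omega

lemma rr_uu (p a : ℕ) : rr p (uu p a) = a := by unfold uu rr; split_ifs <;> omega

lemma uu_rr (p a : ℕ) (h : a ≠ p) : uu p (rr p a) = a := by unfold uu rr; split_ifs <;> omega

def ins (e : ℕ) (p : Fin (e+1)) (g : Fin e → Fin e × Bool) : Fin (e+1) → Fin (e+1) × Bool :=
  fun i =>
    if h : i.val = 0 then (p, true)
    else
      (⟨uu p (g ⟨i.val - 1, by have := i.isLt; omega⟩).1, by
          have := (g ⟨i.val - 1, by have := i.isLt; omega⟩).1.isLt; unfold uu; split <;> omega⟩,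
        (g ⟨i.val - 1, by have := i.isLt; omega⟩).2)

def del (e : ℕ) (p : Fin (e+1)) (f : Fin (e+1) → Fin (e+1) × Bool) : Fin e → Fin e × Bool :=
  fun i =>
    (⟨rr p (f ⟨i.val + 1, by have := i.isLt; omega⟩).1, by
        have h1 := (f ⟨i.val + 1, by have := i.isLt; omega⟩).1.isLt
        have h2 := p.isLt; have h3 := i.isLt; unfold rr; split <;> omega⟩,
      (f ⟨i.val + 1, by have := i.isLt; omega⟩).2)

lemma ins_zero (e : ℕ) (p : Fin (e+1)) (g : Fin e → Fin e × Bool) (i : Fin (e+1)) (hi : i.val = 0) :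
    ins e p g i = (p, true) := by
  unfold ins; rw [dif_pos hi]

lemma ins_fst (e : ℕ) (p : Fin (e+1)) (g : Fin e → Fin e × Bool) (i : Fin (e+1)) (k : ℕ)
    (hk : k < e) (hi : i.val = k + 1) :
    ((ins e p g i).1 : ℕ) = uu p (g ⟨k, hk⟩).1 := by
  unfold ins; rw [dif_neg (by omega)]
  have : (⟨i.val - 1, by have := i.isLt; omega⟩ : Fin e) = ⟨k, hk⟩ := Fin.ext (by simp; omega)
  exact congrArg (fun z => uu p.val ((g z).1 : ℕ)) this

lemma ins_snd (e : ℕ) (p : Fin (e+1)) (g : Fin e → Fin e × Bool) (i : Fin (e+1)) (k : ℕ)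
    (hk : k < e) (hi : i.val = k + 1) :
    (ins e p g i).2 = (g ⟨k, hk⟩).2 := by
  unfold ins; rw [dif_neg (by omega)]
  have : (⟨i.val - 1, by have := i.isLt; omega⟩ : Fin e) = ⟨k, hk⟩ := Fin.ext (by simp; omega)
  exact congrArg (fun z => (g z).2) this

lemma del_fst (e : ℕ) (p : Fin (e+1)) (f : Fin (e+1) → Fin (e+1) × Bool) (i : Fin e) :
    ((del e p f i).1 : ℕ) = rr p (f ⟨i.val + 1, by have := i.isLt; omega⟩).1 := rfl

lemma del_snd (e : ℕ) (p : Fin (e+1)) (f : Fin (e+1) → Fin (e+1) × Bool) (i : Fin e) :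
    (del e p f i).2 = (f ⟨i.val + 1, by have := i.isLt; omega⟩).2 := rfl

lemma sval_lt (d k : ℕ) (h : k < d) (f : Fin d → Fin d × Bool) :
    sval d f k = BVal d f ⟨k, h⟩ := dif_pos h

lemma del_ins (e : ℕ) (p : Fin (e+1)) (g : Fin e → Fin e × Bool) : del e p (ins e p g) = g := by
  funext i
  have h1 : ((del e p (ins e p g) i).1 : ℕ) = ((g i).1 : ℕ) := by
    rw [del_fst, ins_fst e p g _ i.val i.isLt (by simp), rr_uu]
  have h2 : (del e p (ins e p g) i).2 = (g i).2 := by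
    rw [del_snd, ins_snd e p g _ i.val i.isLt (by simp)]
  exact Prod.ext (Fin.ext h1) h2

lemma first_entry (e : ℕ) (p : Fin (e+1)) (f : Fin (e+1) → Fin (e+1) × Bool)
    (h : sval (e+1) f 0 = (p : ℤ) + 1) : f ⟨0, Nat.succ_pos e⟩ = (p, true) := by
  rw [sval_lt (e+1) 0 (Nat.succ_pos e)] at h
  unfold BVal at h
  rcases hfb : (f ⟨0, Nat.succ_pos e⟩).2 with _ | _ <;> rw [hfb] at h
  · rw [if_neg (by simp)] at h; omega
  · rw [if_pos rfl] at h
    have hv : (f ⟨0, Nat.succ_pos e⟩).1 = p := Fin.ext (by omega)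
    exact Prod.ext hv hfb

lemma ins_del (e : ℕ) (p : Fin (e+1)) (f : Fin (e+1) → Fin (e+1) × Bool)
    (hperm : IsSignedPerm (e+1) f) (h0 : sval (e+1) f 0 = (p : ℤ) + 1) :
    ins e p (del e p f) = f := by
  have hf0 := first_entry e p f h0
  funext i
  rcases Nat.eq_zero_or_pos i.val with hi | hi
  · rw [ins_zero e p _ i hi, show i = ⟨0, Nat.succ_pos e⟩ from Fin.ext hi, hf0]
  · have hilt := i.isLt
    have hidx : (⟨(i.val - 1) + 1, by omega⟩ : Fin (e+1)) = i := Fin.ext (by simp; omega)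
    have hne : ((f i).1 : ℕ) ≠ (p : ℕ) := by
      intro heq
      have : (f i).1 = (f ⟨0, Nat.succ_pos e⟩).1 := by rw [hf0]; exact Fin.ext heq
      have := hperm this
      rw [this] at hi; simp at hi
    have h1 : ((ins e p (del e p f) i).1 : ℕ) = ((f i).1 : ℕ) := by
      rw [ins_fst e p _ i (i.val - 1) (by omega) (by omega), del_fst]
      rw [show (⟨(i.val - 1) + 1, by omega⟩ : Fin (e+1)) = i from hidx]
      exact uu_rr _ _ hne
    have h2 : (ins e p (del e p f) i).2 = (f i).2 := by
      rw [ins_snd e p _ i (i.val - 1) (by omega) (by omega), del_snd]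
      rw [show (⟨(i.val - 1) + 1, by omega⟩ : Fin (e+1)) = i from hidx]
    exact Prod.ext (Fin.ext h1) h2

end BRec
namespace BRec

lemma rr_inj (p a b : ℕ) (ha : a ≠ p) (hb : b ≠ p) (h : rr p a = rr p b) : a = b := by
  rw [← uu_rr p a ha, ← uu_rr p b hb, h]

lemma uu_inj (p a b : ℕ) (h : uu p a = uu p b) : a = b := by
  unfold uu at h; split_ifs at h <;> omega

lemma sval_ins_zero (e : ℕ) (p : Fin (e+1)) (g : Fin e → Fin e × Bool) :
    sval (e+1) (ins e p g) 0 = (p : ℤ) + 1 := by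
  rw [sval_lt (e+1) 0 (Nat.succ_pos e)]
  unfold BVal
  rw [ins_zero e p g _ rfl]
  simp

lemma bval_ins_succ (e : ℕ) (p : Fin (e+1)) (g : Fin e → Fin e × Bool) (i : Fin (e+1)) (k : ℕ)
    (hk : k < e) (hi : i.val = k + 1) :
    BVal (e+1) (ins e p g) i
      = if (g ⟨k, hk⟩).2 then ((uu p (g ⟨k, hk⟩).1 : ℕ) : ℤ) + 1
        else -(((uu p (g ⟨k, hk⟩).1 : ℕ) : ℤ) + 1) := by
  unfold BVal
  rw [ins_snd e p g i k hk hi, ins_fst e p g i k hk hi]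

lemma sval_ins_succ (e : ℕ) (p : Fin (e+1)) (g : Fin e → Fin e × Bool) (k : ℕ) (hk : k < e) :
    sval (e+1) (ins e p g) (k+1)
      = if (g ⟨k, hk⟩).2 then ((uu p (g ⟨k, hk⟩).1 : ℕ) : ℤ) + 1
        else -(((uu p (g ⟨k, hk⟩).1 : ℕ) : ℤ) + 1) := by
  have hkk : k + 1 < e + 1 := by omega
  rw [sval_lt (e+1) (k+1) hkk, bval_ins_succ e p g ⟨k+1, hkk⟩ k hk rfl]

lemma sval_ins_lt_iff (e : ℕ) (p : Fin (e+1)) (g : Fin e → Fin e × Bool) (k m : ℕ)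
    (hk : k < e) (hm : m < e) :
    (sval (e+1) (ins e p g) (k+1) < sval (e+1) (ins e p g) (m+1)) ↔ sval e g k < sval e g m := by
  rw [sval_ins_succ e p g k hk, sval_ins_succ e p g m hm, sval_lt e k hk, sval_lt e m hm]
  unfold BVal
  cases hb : (g ⟨k, hk⟩).2 <;> cases hc : (g ⟨m, hm⟩).2 <;>
    simp only [hb, hc, if_true, if_false, Bool.false_eq_true, ite_true, ite_false] <;>
    unfold uu <;> split_ifs <;> push_cast <;> omega

lemma sval_ins_pos (e : ℕ) (p : Fin (e+1)) (g : Fin e → Fin e × Bool) (k : ℕ) (hk : k < e) :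
    (0 < sval (e+1) (ins e p g) (k+1)) ↔ 0 < sval e g k := by
  rw [sval_ins_succ e p g k hk, sval_lt e k hk]
  unfold BVal
  cases hb : (g ⟨k, hk⟩).2 <;>
    simp only [hb, if_true, if_false, Bool.false_eq_true, ite_true, ite_false] <;>
    unfold uu <;> split_ifs <;> push_cast <;> omega

lemma sval_ins_lt_first (e : ℕ) (p : Fin (e+1)) (g : Fin e → Fin e × Bool) (k : ℕ) (hk : k < e) :
    (sval (e+1) (ins e p g) (k+1) < (p : ℤ) + 1) ↔ sval e g k < (p : ℤ) + 1 := by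
  rw [sval_ins_succ e p g k hk, sval_lt e k hk]
  unfold BVal
  cases hb : (g ⟨k, hk⟩).2 <;>
    simp only [hb, if_true, if_false, Bool.false_eq_true, ite_true, ite_false] <;>
    unfold uu <;> split_ifs <;> push_cast <;> omega

lemma desB_sum (d : ℕ) (f : Fin d → Fin d × Bool) :
    desB d f = ∑ i ∈ Finset.range d,
      (if sval d f i < (if i = 0 then (0:ℤ) else sval d f (i-1)) then 1 else 0) := by
  rw [desB, Finset.card_filter]

lemma desB_ins (e : ℕ) (he : 0 < e) (p : Fin (e+1)) (g : Fin e → Fin e × Bool) :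
    desB (e+1) (ins e p g) + (if sval e g 0 < 0 then 1 else 0)
      = desB e g + (if sval e g 0 < (p : ℤ) + 1 then 1 else 0) := by
  obtain ⟨c, rfl⟩ : ∃ c, e = c + 1 := ⟨e - 1, by omega⟩
  rw [desB_sum, desB_sum, Finset.sum_range_succ', Finset.sum_range_succ',
    Finset.sum_range_succ']
  have hF0 : (if sval (c+1+1) (ins (c+1) p g) 0 <
      (if (0:ℕ) = 0 then (0:ℤ) else sval (c+1+1) (ins (c+1) p g) (0-1)) then (1:ℕ) else 0) = 0 := by
    rw [if_pos rfl, sval_ins_zero]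
    have : ¬ ((p : ℤ) + 1 < 0) := by omega
    simp [this]
  have hF1 : (if sval (c+1+1) (ins (c+1) p g) (0+1) <
      (if (0:ℕ)+1 = 0 then (0:ℤ) else sval (c+1+1) (ins (c+1) p g) (0+1-1)) then (1:ℕ) else 0)
      = (if sval (c+1) g 0 < (p : ℤ) + 1 then 1 else 0) := by
    have h01 : (0:ℕ) + 1 ≠ 0 := by omega
    rw [if_neg h01, show (0:ℕ)+1-1 = 0 from rfl, sval_ins_zero (c+1) p g,
      show (0:ℕ)+1 = 0+1 from rfl]
    simp only [sval_ins_lt_first (c+1) p g 0 (by omega)]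
  have hG0 : (if sval (c+1) g 0 <
      (if (0:ℕ) = 0 then (0:ℤ) else sval (c+1) g (0-1)) then (1:ℕ) else 0)
      = (if sval (c+1) g 0 < 0 then 1 else 0) := by rw [if_pos rfl]
  have hFG : ∀ i ∈ Finset.range c,
      (if sval (c+1+1) (ins (c+1) p g) (i+1+1) <
        (if i+1+1 = 0 then (0:ℤ) else sval (c+1+1) (ins (c+1) p g) (i+1+1-1)) then (1:ℕ) else 0)
      = (if sval (c+1) g (i+1) <
        (if i+1 = 0 then (0:ℤ) else sval (c+1) g (i+1-1)) then (1:ℕ) else 0) := by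
    intro i hi
    rw [Finset.mem_range] at hi
    rw [if_neg (show i+1+1 ≠ 0 from by omega), if_neg (show i+1 ≠ 0 from by omega),
      show i+1+1-1 = i+1 from by omega, show i+1-1 = i from by omega]
    simp only [sval_ins_lt_iff (c+1) p g (i+1) i (by omega) (by omega)]
  rw [Finset.sum_congr rfl hFG, hF0, hF1, hG0]
  omega

end BRec
namespace BRec
open Polynomial

lemma mem_BplusSet (d : ℕ) (j : ℤ) (f : Fin d → Fin d × Bool) :
    f ∈ BplusSet d j ↔ IsSignedPerm d f ∧ sval d f 0 = j ∧ 0 < sval d f (d-1) := by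
  unfold BplusSet; simp

lemma isSignedPerm_ins (e : ℕ) (p : Fin (e+1)) (g : Fin e → Fin e × Bool)
    (hg : IsSignedPerm e g) : IsSignedPerm (e+1) (ins e p g) := by
  intro i i' h
  have hv : ((ins e p g i).1 : ℕ) = ((ins e p g i').1 : ℕ) := congrArg Fin.val h
  rcases Nat.eq_zero_or_pos i.val with hi | hi <;> rcases Nat.eq_zero_or_pos i'.val with hi' | hi'
  · exact Fin.ext (by omega)
  · rw [ins_zero e p g i hi, ins_fst e p g i' (i'.val - 1) (by have := i'.isLt; omega) (by omega)]
      at hv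
    exact absurd hv.symm (uu_ne _ _)
  · rw [ins_zero e p g i' hi', ins_fst e p g i (i.val - 1) (by have := i.isLt; omega) (by omega)]
      at hv
    exact absurd hv (uu_ne _ _)
  · rw [ins_fst e p g i (i.val - 1) (by have := i.isLt; omega) (by omega),
      ins_fst e p g i' (i'.val - 1) (by have := i'.isLt; omega) (by omega)] at hv
    have h2 := uu_inj _ _ _ hv
    have h3 := hg (Fin.ext h2 : (g _).1 = (g _).1)
    have h4 := congrArg Fin.val h3
    simp only at h4
    exact Fin.ext (by omega)

lemma ne_p (e : ℕ) (p : Fin (e+1)) (f : Fin (e+1) → Fin (e+1) × Bool)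
    (hperm : IsSignedPerm (e+1) f) (h0 : sval (e+1) f 0 = (p : ℤ) + 1)
    (m : Fin (e+1)) (hm : m.val ≠ 0) : ((f m).1 : ℕ) ≠ (p : ℕ) := by
  intro heq
  have hf0 := first_entry e p f h0
  have : (f m).1 = (f ⟨0, Nat.succ_pos e⟩).1 := by rw [hf0]; exact Fin.ext heq
  have := hperm this
  rw [this] at hm; simp at hm

lemma isSignedPerm_del (e : ℕ) (p : Fin (e+1)) (f : Fin (e+1) → Fin (e+1) × Bool)
    (hperm : IsSignedPerm (e+1) f) (h0 : sval (e+1) f 0 = (p : ℤ) + 1) :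
    IsSignedPerm e (del e p f) := by
  intro i i' h
  have hv : ((del e p f i).1 : ℕ) = ((del e p f i').1 : ℕ) := congrArg Fin.val h
  rw [del_fst, del_fst] at hv
  have hne : ((f ⟨i.val + 1, by have := i.isLt; omega⟩).1 : ℕ) ≠ (p : ℕ) :=
    ne_p e p f hperm h0 _ (by simp)
  have hne' : ((f ⟨i'.val + 1, by have := i'.isLt; omega⟩).1 : ℕ) ≠ (p : ℕ) :=
    ne_p e p f hperm h0 _ (by simp)
  have h2 := rr_inj _ _ _ hne hne' hv
  have h3 := hperm (Fin.ext h2 : (f _).1 = (f _).1)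
  have h4 := congrArg Fin.val h3
  simp only at h4
  exact Fin.ext (by omega)

lemma ins_mem (e : ℕ) (he : 0 < e) (p : Fin (e+1)) (j : ℤ) (g : Fin e → Fin e × Bool)
    (hg : g ∈ BplusSet e j) : ins e p g ∈ BplusSet (e+1) ((p : ℤ) + 1) := by
  rw [mem_BplusSet] at hg ⊢
  obtain ⟨h1, h2, h3⟩ := hg
  refine ⟨isSignedPerm_ins e p g h1, sval_ins_zero e p g, ?_⟩
  rw [show (e+1)-1 = (e-1)+1 from by omega, sval_ins_pos e p g (e-1) (by omega)]
  exact h3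

lemma del_mem (e : ℕ) (he : 0 < e) (p : Fin (e+1)) (f : Fin (e+1) → Fin (e+1) × Bool)
    (hf : f ∈ BplusSet (e+1) ((p : ℤ) + 1)) :
    del e p f ∈ BplusSet e (sval e (del e p f) 0) := by
  rw [mem_BplusSet] at hf ⊢
  obtain ⟨h1, h2, h3⟩ := hf
  refine ⟨isSignedPerm_del e p f h1 h2, rfl, ?_⟩
  have hid := ins_del e p f h1 h2
  rw [← hid, show (e+1)-1 = (e-1)+1 from by omega,
    sval_ins_pos e p (del e p f) (e-1) (by omega)] at h3
  exact h3

lemma fiber_sum (e : ℕ) (he : 0 < e) (p : Fin (e+1)) (j : ℤ) (hj : j ≠ 0) :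
    ∑ f ∈ (BplusSet (e+1) ((p : ℤ)+1)).filter (fun f => sval e (del e p f) 0 = j),
        (X : Polynomial ℝ) ^ desB (e+1) f
      = X ^ (if 0 < j ∧ j < (p : ℤ)+1 then 1 else 0) * BplusPoly e j := by
  rw [BplusPoly, Finset.mul_sum]
  apply Finset.sum_nbij' (del e p) (ins e p)
  · intro f hf
    rw [Finset.mem_filter] at hf
    have := del_mem e he p f hf.1
    rw [hf.2] at this
    exact this
  · intro g hg
    rw [Finset.mem_filter]
    refine ⟨ins_mem e he p j g hg, ?_⟩
    rw [del_ins]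
    exact ((mem_BplusSet e j g).mp hg).2.1
  · intro f hf
    rw [Finset.mem_filter, mem_BplusSet] at hf
    exact ins_del e p f hf.1.1 hf.1.2.1
  · intro g _
    exact del_ins e p g
  · intro f hf
    rw [Finset.mem_filter, mem_BplusSet] at hf
    obtain ⟨⟨h1, h2, h3⟩, hc⟩ := hf
    have hd := desB_ins e he p (del e p f)
    rw [ins_del e p f h1 h2] at hd
    simp only [hc] at hd
    rw [← pow_add]
    congr 1
    rcases lt_or_gt_of_ne hj with hneg | hpos
    · rw [if_pos hneg, if_pos (show j < (p:ℤ)+1 from by omega)] at hd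
      rw [if_neg (show ¬(0 < j ∧ j < (p:ℤ)+1) from by omega)]
      omega
    · rw [if_neg (show ¬ (j < 0) from by omega)] at hd
      by_cases hjp : j < (p:ℤ)+1
      · rw [if_pos hjp] at hd
        rw [if_pos (show (0 < j ∧ j < (p:ℤ)+1) from ⟨hpos, hjp⟩)]
        omega
      · rw [if_neg hjp] at hd
        rw [if_neg (show ¬(0 < j ∧ j < (p:ℤ)+1) from by tauto)]
        omega

end BRec
open Polynomial BRec in
/-- for `d ≥ 2` and `1 ≤ s ≤ d`, the recurrence
`B^+_{d,s}(t) = t·∑_{j=1}^{s−1} B^+_{d−1,j}(t) + ∑_{j=s}^{d−1} B^+_{d−1,j}(t)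
  + ∑_{j=1}^{d−1} B^+_{d−1,−j}(t)`
holds, with initial conditions `B^+_{1,1}(t) = 1` and `B^+_{1,−1}(t) = 0`. -/
theorem BplusPoly_recurrence (d : ℕ) (s : ℤ) (hd : 2 ≤ d) (hs : 1 ≤ s) (hsd : s ≤ d) :
    BplusPoly 1 1 = 1 ∧ BplusPoly 1 (-1) = 0 ∧
    BplusPoly d s =
      X * ∑ j ∈ Finset.Icc (1 : ℤ) (s - 1), BplusPoly (d - 1) j
      + ∑ j ∈ Finset.Icc s ((d : ℤ) - 1), BplusPoly (d - 1) j
      + ∑ j ∈ Finset.Icc (1 : ℤ) ((d : ℤ) - 1), BplusPoly (d - 1) (-j) := by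
  refine ⟨?_, ?_, ?_⟩
  · rw [BplusPoly, show BplusSet 1 1 = {fun _ => ((0 : Fin 1), true)} from by decide,
      Finset.sum_singleton, show desB 1 (fun _ => ((0 : Fin 1), true)) = 0 from by decide,
      pow_zero]
  · rw [BplusPoly, show BplusSet 1 (-1) = ∅ from by decide, Finset.sum_empty]
  · obtain ⟨E, rfl⟩ : ∃ E, d = E + 1 := ⟨d - 1, by omega⟩
    have hE : 0 < E := by omega
    have hE1 : s ≤ (E : ℤ) + 1 := by exact_mod_cast hsd
    obtain ⟨p, hps⟩ : ∃ p : Fin (E+1), (p : ℤ) + 1 = s :=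
      ⟨⟨(s-1).toNat, by omega⟩, by simp; omega⟩
    have hpE : (p : ℤ) ≤ E := by have := p.isLt; omega
    rw [show ((E+1 : ℕ) : ℤ) - 1 = (E : ℤ) from by push_cast; ring]
    simp only [Nat.add_sub_cancel]
    rw [← hps, show (p : ℤ) + 1 - 1 = (p : ℤ) from by ring]
    have hmaps : ∀ f ∈ BplusSet (E+1) ((p : ℤ)+1),
        sval E (del E p f) 0 ∈ (Finset.Icc (-(E:ℤ)) E).erase 0 := by
      intro f _
      rw [sval_lt E 0 hE]
      unfold BVal
      have hb := (del E p f ⟨0, hE⟩).1.isLt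
      simp only [Finset.mem_erase, Finset.mem_Icc]
      split_ifs <;> omega
    have hJ : (Finset.Icc (-(E:ℤ)) E).erase 0
        = Finset.Icc (-(E:ℤ)) (-1) ∪ Finset.Icc 1 E := by
      ext x
      simp only [Finset.mem_erase, Finset.mem_Icc, Finset.mem_union]
      omega
    have hdisj : Disjoint (Finset.Icc (-(E:ℤ)) (-1)) (Finset.Icc 1 E) := by
      rw [Finset.disjoint_left]
      intro a ha hb
      simp only [Finset.mem_Icc] at ha hb
      omega
    have hsplit : Finset.Icc (1:ℤ) E = Finset.Icc 1 (p:ℤ) ∪ Finset.Icc ((p:ℤ)+1) E := by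
      ext x
      simp only [Finset.mem_Icc, Finset.mem_union]
      omega
    have hdisj2 : Disjoint (Finset.Icc (1:ℤ) (p:ℤ)) (Finset.Icc ((p:ℤ)+1) E) := by
      rw [Finset.disjoint_left]
      intro a ha hb
      simp only [Finset.mem_Icc] at ha hb
      omega
    calc BplusPoly (E+1) ((p:ℤ)+1)
        = ∑ j ∈ (Finset.Icc (-(E:ℤ)) E).erase 0,
            ∑ f ∈ (BplusSet (E+1) ((p : ℤ)+1)).filter (fun f => sval E (del E p f) 0 = j),
              (X : Polynomial ℝ) ^ desB (E+1) f := by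
          rw [BplusPoly]
          exact (Finset.sum_fiberwise_of_maps_to hmaps _).symm
      _ = ∑ j ∈ (Finset.Icc (-(E:ℤ)) E).erase 0,
            X ^ (if 0 < j ∧ j < (p : ℤ)+1 then 1 else 0) * BplusPoly E j :=
          Finset.sum_congr rfl (fun j hj =>
            fiber_sum E hE p j (Finset.ne_of_mem_erase hj))
      _ = (∑ j ∈ Finset.Icc (-(E:ℤ)) (-1),
            X ^ (if 0 < j ∧ j < (p : ℤ)+1 then 1 else 0) * BplusPoly E j)
          + ∑ j ∈ Finset.Icc (1:ℤ) E,
            X ^ (if 0 < j ∧ j < (p : ℤ)+1 then 1 else 0) * BplusPoly E j := by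
          rw [hJ, Finset.sum_union hdisj]
      _ = (∑ j ∈ Finset.Icc (1:ℤ) E, BplusPoly E (-j))
          + ((X * ∑ j ∈ Finset.Icc (1:ℤ) (p:ℤ), BplusPoly E j)
            + ∑ j ∈ Finset.Icc ((p:ℤ)+1) E, BplusPoly E j) := by
          congr 1
          · refine Finset.sum_nbij' (fun j => -j) (fun j => -j) ?_ ?_ ?_ ?_ ?_
            · intro a ha; simp only [Finset.mem_Icc] at ha ⊢; omega
            · intro a ha; simp only [Finset.mem_Icc] at ha ⊢; omega
            · intro a _; ring
            · intro a _; ring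
            · intro a ha
              simp only [Finset.mem_Icc] at ha
              rw [if_neg (by omega), pow_zero, one_mul, neg_neg]
          · rw [hsplit, Finset.sum_union hdisj2]
            congr 1
            · rw [Finset.mul_sum]
              refine Finset.sum_congr rfl (fun j hj => ?_)
              simp only [Finset.mem_Icc] at hj
              rw [if_pos (by omega), pow_one]
            · refine Finset.sum_congr rfl (fun j hj => ?_)
              simp only [Finset.mem_Icc] at hj
              rw [if_neg (by omega), pow_zero, one_mul]
      _ = X * (∑ j ∈ Finset.Icc (1:ℤ) (p:ℤ), BplusPoly E j)
          + ∑ j ∈ Finset.Icc ((p:ℤ)+1) E, BplusPoly E j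
          + ∑ j ∈ Finset.Icc (1:ℤ) E, BplusPoly E (-j) := by ring
end

section
/- For d ≥ 2 and 1 ≤ j < d, the j-Eulerian polynomial of type A satisfies A_{d,j}(t) = (1 + t(d−2)) A_{d−1,j}(t) + t(1−t) d/dt A_{d−1,j}(t). -/
open Polynomial

/-- `σ_{k+1}` of the permutation, as an element of `{1,…,d}` (`0` out of range). -/
def svalA (d : ℕ) (σ : Equiv.Perm (Fin d)) (k : ℕ) : ℕ :=
  if h : k < d then (σ ⟨k, h⟩ : ℕ) + 1 else 0

/-- The type-A descent number `des_A(σ) = |{i ∈ [d−1] : σ_i > σ_{i+1}}|`. -/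
def desA (d : ℕ) (σ : Equiv.Perm (Fin d)) : ℕ :=
  ((Finset.range (d - 1)).filter fun i => svalA d σ (i + 1) < svalA d σ i).card

/-- The `j`-Eulerian polynomial of type A:
`A_{d,j}(t) = ∑_{σ ∈ S_d, σ_1 = j} t^{des_A(σ)}`. -/
noncomputable def APoly (d j : ℕ) : Polynomial ℝ :=
  ∑ σ ∈ Finset.univ.filter (fun σ : Equiv.Perm (Fin d) => svalA d σ 0 = j),
    X ^ desA d σ

open Finset Equiv

/-- value of `τ` at nat index, or `n` if out of range -/
def tv {n : ℕ} (τ : Equiv.Perm (Fin n)) (k : ℕ) : ℕ :=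
  if h : k < n then (τ ⟨k, h⟩).val else n

def tu {n : ℕ} (τ : Equiv.Perm (Fin n)) (k : ℕ) : ℕ :=
  if h : k < n then (τ.symm ⟨k, h⟩).val else n

lemma tv_lt {n : ℕ} (τ : Equiv.Perm (Fin n)) {k : ℕ} (h : k < n) : tv τ k < n := by
  simp only [tv, dif_pos h]; exact (τ ⟨k, h⟩).isLt

lemma tu_lt {n : ℕ} (τ : Equiv.Perm (Fin n)) {k : ℕ} (h : k < n) : tu τ k < n := by
  simp only [tu, dif_pos h]; exact (τ.symm ⟨k, h⟩).isLt

lemma tu_tv {n : ℕ} (τ : Equiv.Perm (Fin n)) {k : ℕ} (h : k < n) : tu τ (tv τ k) = k := by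
  simp only [tv, dif_pos h, tu, dif_pos (τ ⟨k, h⟩).isLt]
  rw [show (⟨(τ ⟨k, h⟩).val, (τ ⟨k, h⟩).isLt⟩ : Fin n) = τ ⟨k, h⟩ from rfl]
  simp

lemma tv_tu {n : ℕ} (τ : Equiv.Perm (Fin n)) {k : ℕ} (h : k < n) : tv τ (tu τ k) = k := by
  simp only [tu, dif_pos h, tv, dif_pos (τ.symm ⟨k, h⟩).isLt]
  rw [show (⟨(τ.symm ⟨k, h⟩).val, (τ.symm ⟨k, h⟩).isLt⟩ : Fin n) = τ.symm ⟨k, h⟩ from rfl]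
  simp

/-- nat-level insertion map -/
def insF {n : ℕ} (τ : Equiv.Perm (Fin n)) (q k : ℕ) : ℕ :=
  if k < q then tv τ k else if k = q then n else tv τ (k - 1)

def insG {n : ℕ} (τ : Equiv.Perm (Fin n)) (q k : ℕ) : ℕ :=
  if k = n then q else if tu τ k < q then tu τ k else tu τ k + 1

lemma insF_lt {n : ℕ} (τ : Equiv.Perm (Fin n)) {q k : ℕ} (hq : q ≤ n) (hk : k ≤ n) :
    insF τ q k < n + 1 := by
  unfold insF
  split_ifs with h1 h2
  · exact Nat.lt_succ_of_lt (tv_lt τ (by omega))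
  · omega
  · exact Nat.lt_succ_of_lt (tv_lt τ (by omega))

lemma insG_lt {n : ℕ} (τ : Equiv.Perm (Fin n)) {q k : ℕ} (hq : q ≤ n) (hk : k ≤ n) :
    insG τ q k < n + 1 := by
  unfold insG
  split_ifs with h1 h2
  · omega
  · exact Nat.lt_succ_of_lt (tu_lt τ (by omega))
  · exact Nat.succ_lt_succ (tu_lt τ (by omega))

lemma insG_insF {n : ℕ} (τ : Equiv.Perm (Fin n)) {q k : ℕ} (hq : q ≤ n) (hk : k ≤ n) :
    insG τ q (insF τ q k) = k := by
  unfold insF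
  by_cases h1 : k < q
  · rw [if_pos h1]
    have hkn : k < n := by omega
    have h3 : tv τ k ≠ n := by have := tv_lt τ hkn; omega
    unfold insG
    rw [if_neg h3, tu_tv τ hkn, if_pos h1]
  · by_cases h2 : k = q
    · rw [if_neg h1, if_pos h2]
      unfold insG
      rw [if_pos rfl, h2]
    · rw [if_neg h1, if_neg h2]
      have hkn : k - 1 < n := by omega
      have h3 : tv τ (k-1) ≠ n := by have := tv_lt τ hkn; omega
      unfold insG
      rw [if_neg h3, tu_tv τ hkn, if_neg (by omega)]
      omega

lemma insF_insG {n : ℕ} (τ : Equiv.Perm (Fin n)) {q k : ℕ} (hq : q ≤ n) (hk : k ≤ n) :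
    insF τ q (insG τ q k) = k := by
  unfold insF insG
  by_cases h1 : k = n
  · rw [if_pos h1]
    split_ifs with h2 h3 <;> omega
  · rw [if_neg h1]
    have hkn : k < n := by omega
    have htu := tu_lt τ hkn
    by_cases h2 : tu τ k < q
    · rw [if_pos h2, if_pos h2, tv_tu τ hkn]
    · rw [if_neg h2, if_neg (by omega), if_neg (by omega)]
      simp only [Nat.add_sub_cancel]
      rw [tv_tu τ hkn]

/-- Insert the top value `n` (0-indexed) at position `q` into a permutation `τ` of `Fin n`. -/
def insPerm (n : ℕ) (τ : Equiv.Perm (Fin n)) (q : Fin (n+1)) : Equiv.Perm (Fin (n+1)) where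
  toFun i := ⟨insF τ q.val i.val, insF_lt τ (by omega) (by omega)⟩
  invFun j := ⟨insG τ q.val j.val, insG_lt τ (by omega) (by omega)⟩
  left_inv i := Fin.ext (insG_insF τ (by omega) (by omega))
  right_inv j := Fin.ext (insF_insG τ (by omega) (by omega))

lemma svalA_eq_tv {n : ℕ} (τ : Equiv.Perm (Fin n)) {k : ℕ} (h : k < n) :
    svalA n τ k = tv τ k + 1 := by
  simp only [svalA, dif_pos h, tv]

lemma svalA_le {n : ℕ} (τ : Equiv.Perm (Fin n)) (k : ℕ) : svalA n τ k ≤ n := by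
  unfold svalA
  split_ifs with h
  · have := (τ ⟨k, h⟩).isLt; omega
  · omega

lemma svalA_insPerm {n : ℕ} (τ : Equiv.Perm (Fin n)) (q : Fin (n+1)) {k : ℕ} (h : k < n + 1) :
    svalA (n+1) (insPerm n τ q) k = insF τ q.val k + 1 := by
  simp only [svalA, dif_pos h]
  rfl

lemma desA_insPerm {n : ℕ} (τ : Equiv.Perm (Fin n)) (p : Fin n) :
    desA (n+1) (insPerm n τ p.succ) =
      desA n τ +
        (if p.val + 1 < n ∧ ¬ (svalA n τ (p.val + 1) < svalA n τ p.val) then 1 else 0) := by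
  have hp := p.isLt
  have hqv : (p.succ : Fin (n+1)).val = p.val + 1 := rfl
  set σ := insPerm n τ p.succ with hσ
  have hA : ∀ i, i < p.val + 1 → svalA (n+1) σ i = svalA n τ i := by
    intro i hi
    rw [svalA_insPerm τ p.succ (by omega), hqv]
    unfold insF
    rw [if_pos hi, svalA_eq_tv τ (by omega)]
  have hB : svalA (n+1) σ (p.val + 1) = n + 1 := by
    rw [svalA_insPerm τ p.succ (by omega), hqv]
    unfold insF
    rw [if_neg (by omega), if_pos rfl]
  have hC : ∀ i, p.val + 1 < i → i ≤ n → svalA (n+1) σ i = svalA n τ (i-1) := by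
    intro i h1 h2
    rw [svalA_insPerm τ p.succ (by omega), hqv]
    unfold insF
    rw [if_neg (by omega), if_neg (by omega), svalA_eq_tv τ (by omega)]
  set F : ℕ → ℕ := fun i => if svalA (n+1) σ (i+1) < svalA (n+1) σ i then 1 else 0 with hF
  set G : ℕ → ℕ := fun i => if svalA n τ (i+1) < svalA n τ i then 1 else 0 with hG
  have hdesσ : desA (n+1) σ = ∑ i ∈ range n, F i := by
    rw [desA, Finset.card_filter]
    simp only [hF, Nat.add_sub_cancel]
  have hdesτ : desA n τ = ∑ i ∈ range (n-1), G i := by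
    rw [desA, Finset.card_filter]
  have hFG : ∀ i, i < p.val → F i = G i := by
    intro i hi
    simp only [hF, hG, hA i (by omega), hA (i+1) (by omega)]
  have hFp : F p.val = 0 := by
    simp only [hF]
    rw [hB, hA p.val (by omega), if_neg (by have := svalA_le τ p.val; omega)]
  have hFq : p.val + 1 < n → F (p.val + 1) = 1 := by
    intro h
    simp only [hF]
    rw [hB, hC (p.val+1+1) (by omega) (by omega)]
    rw [if_pos (by have := svalA_le τ (p.val+1+1-1); omega)]
  have hF2 : ∀ i, p.val + 1 < i → i < n → F i = G (i-1) := by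
    intro i h1 h2
    simp only [hF, hG]
    rw [hC i (by omega) (by omega), hC (i+1) (by omega) (by omega)]
    have e1 : i + 1 - 1 = i := by omega
    have e2 : i - 1 + 1 = i := by omega
    rw [e1, e2]
  rw [hdesσ, hdesτ]
  have h1 : ∑ i ∈ range n, F i
      = ∑ i ∈ range (p.val+1), F i + ∑ j ∈ range (n - (p.val+1)), F (p.val+1+j) :=
    calc ∑ i ∈ range n, F i = ∑ i ∈ Ico 0 n, F i := by rw [Finset.range_eq_Ico]
      _ = ∑ i ∈ Ico 0 (p.val+1), F i + ∑ i ∈ Ico (p.val+1) n, F i :=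
          (Finset.sum_Ico_consecutive F (Nat.zero_le _) (by omega : p.val + 1 ≤ n)).symm
      _ = _ := by rw [← Finset.range_eq_Ico, Finset.sum_Ico_eq_sum_range]
  have h3 : ∑ i ∈ range (n-1), G i
      = ∑ i ∈ range p.val, G i + ∑ j ∈ range (n - 1 - p.val), G (p.val + j) :=
    calc ∑ i ∈ range (n-1), G i = ∑ i ∈ Ico 0 (n-1), G i := by rw [Finset.range_eq_Ico]
      _ = ∑ i ∈ Ico 0 p.val, G i + ∑ i ∈ Ico p.val (n-1), G i :=
          (Finset.sum_Ico_consecutive G (Nat.zero_le _) (by omega : p.val ≤ n - 1)).symm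
      _ = _ := by rw [← Finset.range_eq_Ico, Finset.sum_Ico_eq_sum_range]
  have h2 : ∑ i ∈ range p.val, F i = ∑ i ∈ range p.val, G i :=
    Finset.sum_congr rfl (fun i hi => hFG i (Finset.mem_range.mp hi))
  rw [h1, Finset.sum_range_succ, hFp, Nat.add_zero, h2, h3]
  by_cases hend : p.val + 1 = n
  · have e0 : n - (p.val+1) = 0 := by omega
    have e1 : n - 1 - p.val = 0 := by omega
    rw [e0, e1, Finset.sum_range_zero, Finset.sum_range_zero,
      if_neg (by rintro ⟨h, -⟩; omega)]
    omega
  · have hlt : p.val + 1 < n := by omega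
    set m := n - p.val - 2 with hm
    have e1 : n - (p.val+1) = m + 1 := by omega
    have e3 : n - 1 - p.val = m + 1 := by omega
    rw [e1, e3, Finset.sum_range_succ', Finset.sum_range_succ']
    have e2 : ∑ j ∈ range m, F (p.val+1+(j+1)) = ∑ j ∈ range m, G (p.val+1+j) := by
      refine Finset.sum_congr rfl fun j hj => ?_
      have hj' := Finset.mem_range.mp hj
      rw [hF2 (p.val+1+(j+1)) (by omega) (by omega)]
      have e : p.val + 1 + (j+1) - 1 = p.val + 1 + j := by omega
      rw [e]
    have e4 : ∑ j ∈ range m, G (p.val + (j+1)) = ∑ j ∈ range m, G (p.val + 1 + j) := by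
      refine Finset.sum_congr rfl fun j _ => ?_
      congr 1
      omega
    rw [e2, e4]
    simp only [Nat.add_zero]
    rw [hFq hlt]
    have hGp : G p.val
        + (if p.val + 1 < n ∧ ¬ svalA n τ (p.val+1) < svalA n τ p.val then 1 else 0) = 1 := by
      simp only [hG]
      by_cases hd : svalA n τ (p.val+1) < svalA n τ p.val
      · rw [if_pos hd, if_neg (by tauto)]
      · rw [if_neg hd, if_pos ⟨hlt, hd⟩]
    omega

lemma desA_le {n : ℕ} (τ : Equiv.Perm (Fin n)) : desA n τ ≤ n - 1 := by
  have := Finset.card_filter_le (Finset.range (n-1))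
    (fun i => svalA n τ (i + 1) < svalA n τ i)
  simpa [desA] using this

lemma card_keep {n : ℕ} (hn : 1 ≤ n) (τ : Equiv.Perm (Fin n)) :
    (Finset.univ.filter (fun p : Fin n =>
      ¬ (p.val + 1 < n ∧ ¬ svalA n τ (p.val + 1) < svalA n τ p.val))).card
      = desA n τ + 1 := by
  have h1 : (Finset.univ.filter (fun p : Fin n =>
      ¬ (p.val + 1 < n ∧ ¬ svalA n τ (p.val + 1) < svalA n τ p.val))).card
      = ((Finset.range n).filter (fun k =>
          ¬ (k + 1 < n ∧ ¬ svalA n τ (k + 1) < svalA n τ k))).card := by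
    rw [Finset.card_filter, Finset.card_filter]
    exact Fin.sum_univ_eq_sum_range
      (fun k => if ¬ (k + 1 < n ∧ ¬ svalA n τ (k + 1) < svalA n τ k) then 1 else 0) n
  rw [h1]
  have h2 : (Finset.range n).filter (fun k =>
        ¬ (k + 1 < n ∧ ¬ svalA n τ (k + 1) < svalA n τ k))
      = insert (n-1) ((Finset.range (n-1)).filter
          (fun k => svalA n τ (k + 1) < svalA n τ k)) := by
    ext i
    simp only [Finset.mem_filter, Finset.mem_range, Finset.mem_insert]
    constructor
    · rintro ⟨hi, hP⟩
      by_cases he : i = n - 1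
      · exact Or.inl he
      · right
        push_neg at hP
        exact ⟨by omega, hP (by omega)⟩
    · rintro (rfl | ⟨hi, hD⟩)
      · exact ⟨by omega, by rintro ⟨h, -⟩; omega⟩
      · exact ⟨by omega, fun h => h.2 hD⟩
  rw [h2, Finset.card_insert_of_notMem (by simp)]
  rfl

lemma sum_insert_poly {n : ℕ} (hn : 1 ≤ n) (τ : Equiv.Perm (Fin n)) :
    ∑ p : Fin n, (X : Polynomial ℝ) ^ desA (n+1) (insPerm n τ p.succ)
      = (n - 1 - desA n τ) • X ^ (desA n τ + 1) + (desA n τ + 1) • X ^ desA n τ := by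
  have key : ∀ p : Fin n, (X : Polynomial ℝ) ^ desA (n+1) (insPerm n τ p.succ)
      = if (p.val + 1 < n ∧ ¬ svalA n τ (p.val + 1) < svalA n τ p.val)
          then X ^ (desA n τ + 1) else X ^ desA n τ := by
    intro p
    rw [desA_insPerm]
    by_cases h : (p.val + 1 < n ∧ ¬ svalA n τ (p.val + 1) < svalA n τ p.val)
    · rw [if_pos h, if_pos h]
    · rw [if_neg h, if_neg h, Nat.add_zero]
  rw [Finset.sum_congr rfl (fun p _ => key p), Finset.sum_ite,
    Finset.sum_const, Finset.sum_const, card_keep hn τ]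
  congr 2
  have htot := Finset.card_filter_add_card_filter_not
    (s := (Finset.univ : Finset (Fin n)))
    (p := fun p : Fin n => (p.val + 1 < n ∧ ¬ svalA n τ (p.val + 1) < svalA n τ p.val))
  have hck := card_keep hn τ
  have hcard : (Finset.univ : Finset (Fin n)).card = n := by simp
  have hdle := desA_le τ
  omega

lemma card_first {m : ℕ} (c : Fin (m+1)) :
    (Finset.univ.filter (fun σ : Equiv.Perm (Fin (m+1)) => σ 0 = c)).card
      = Nat.factorial m := by
  have himg : (Finset.univ.filter (fun σ : Equiv.Perm (Fin (m+1)) => σ 0 = c))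
      = Finset.image (fun e : Equiv.Perm (Fin m) => Equiv.Perm.decomposeFin.symm (c, e))
          Finset.univ := by
    ext σ
    simp only [Finset.mem_filter, Finset.mem_univ, true_and, Finset.mem_image]
    constructor
    · intro h0
      refine ⟨(Equiv.Perm.decomposeFin σ).2, ?_⟩
      have h1 : (Equiv.Perm.decomposeFin σ).1 = σ 0 := by
        conv_rhs => rw [← Equiv.Perm.decomposeFin.symm_apply_apply σ]
        rw [show Equiv.Perm.decomposeFin σ
          = ((Equiv.Perm.decomposeFin σ).1, (Equiv.Perm.decomposeFin σ).2) from rfl]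
        rw [Equiv.Perm.decomposeFin_symm_apply_zero]
      rw [← h0, ← h1]
      exact Equiv.Perm.decomposeFin.symm_apply_apply σ
    · rintro ⟨e, rfl⟩
      exact Equiv.Perm.decomposeFin_symm_apply_zero c e
  rw [himg, Finset.card_image_of_injective _ (fun a b hab => by
    have := Equiv.Perm.decomposeFin.symm.injective hab
    exact (Prod.mk.injEq _ _ _ _).mp this |>.2)]
  simp [Fintype.card_perm]

lemma card_sval_filter {n : ℕ} {j : ℕ} (hj1 : 1 ≤ j) (hjn : j ≤ n) :
    (Finset.univ.filter (fun σ : Equiv.Perm (Fin n) => svalA n σ 0 = j)).card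
      = Nat.factorial (n-1) := by
  cases n with
  | zero => omega
  | succ m =>
    have hcond : ∀ σ : Equiv.Perm (Fin (m+1)),
        (svalA (m+1) σ 0 = j ↔ σ 0 = ⟨j-1, by omega⟩) := by
      intro σ
      rw [svalA, dif_pos (by omega : 0 < m+1)]
      have h0 : (⟨0, by omega⟩ : Fin (m+1)) = 0 := rfl
      rw [h0]
      constructor
      · intro h
        exact Fin.ext (show (σ 0).val = j - 1 by omega)
      · intro h
        rw [h]
        simp
        omega
    rw [Finset.filter_congr (fun σ _ => by rw [hcond σ]), card_first]
    simp

lemma insPerm_symm_last {n : ℕ} (τ : Equiv.Perm (Fin n)) (q : Fin (n+1)) :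
    (insPerm n τ q).symm (Fin.last n) = q := by
  apply Fin.ext
  show insG τ q.val (Fin.last n).val = q.val
  unfold insG
  rw [if_pos (show (Fin.last n).val = n from rfl)]

lemma tv_eq_imp {n : ℕ} {τ τ' : Equiv.Perm (Fin n)} (i : Fin n)
    (h : tv τ i.val = tv τ' i.val) : τ i = τ' i := by
  unfold tv at h
  rw [dif_pos i.isLt, dif_pos i.isLt] at h
  have e : (⟨i.val, i.isLt⟩ : Fin n) = i := Fin.ext rfl
  rw [e] at h
  exact Fin.ext h

lemma insPerm_inj {n : ℕ} {τ τ' : Equiv.Perm (Fin n)} {p p' : Fin n}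
    (h : insPerm n τ p.succ = insPerm n τ' p'.succ) : τ = τ' ∧ p = p' := by
  have hq : p.succ = p'.succ := by
    rw [← insPerm_symm_last τ p.succ, ← insPerm_symm_last τ' p'.succ, h]
  have hp : p = p' := Fin.succ_injective _ hq
  subst hp
  refine ⟨?_, rfl⟩
  apply Equiv.ext
  intro i
  have happ : ∀ k, (hk : k < n+1) → insF τ (p.succ : Fin (n+1)).val k = insF τ' (p.succ : Fin (n+1)).val k := by
    intro k hk
    exact congrArg (fun π : Equiv.Perm (Fin (n+1)) => (π ⟨k, hk⟩).val) h
  have hqv : (p.succ : Fin (n+1)).val = p.val + 1 := rfl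
  by_cases hc : i.val < p.val + 1
  · have h1 := happ i.val (by omega)
    unfold insF at h1
    rw [hqv, if_pos hc, if_pos hc] at h1
    exact tv_eq_imp i h1
  · have h1 := happ (i.val + 1) (by omega)
    unfold insF at h1
    rw [hqv, if_neg (by omega), if_neg (by omega), if_neg (by omega), if_neg (by omega)] at h1
    simp only [Nat.add_sub_cancel] at h1
    exact tv_eq_imp i h1

lemma svalA_insPerm_zero {n : ℕ} (τ : Equiv.Perm (Fin n)) (p : Fin n) :
    svalA (n+1) (insPerm n τ p.succ) 0 = svalA n τ 0 := by
  have hp := p.isLt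
  rw [svalA_insPerm τ p.succ (by omega)]
  unfold insF
  rw [if_pos (show 0 < (p.succ : Fin (n+1)).val from by rw [show (p.succ : Fin (n+1)).val = p.val + 1 from rfl]; omega)]
  rw [svalA_eq_tv τ (by omega)]

lemma perterm {n k : ℕ} (hn : 1 ≤ n) (hk : k ≤ n - 1) :
    ((n - 1 - k : ℕ) • (X : Polynomial ℝ) ^ (k+1) + (k+1) • X ^ k)
      = (1 + C ((n:ℝ) - 1) * X) * X ^ k + X * (1 - X) * derivative (X ^ k : Polynomial ℝ) := by
  have e1 : ((n - 1 - k : ℕ) : ℝ) = (n : ℝ) - 1 - k := by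
    rw [Nat.cast_sub (by omega), Nat.cast_sub hn]
    push_cast
    ring
  rw [nsmul_eq_mul, nsmul_eq_mul, derivative_X_pow]
  rw [show ((n - 1 - k : ℕ) : Polynomial ℝ) = C ((n - 1 - k : ℕ) : ℝ) by simp, e1]
  rw [show ((k + 1 : ℕ) : Polynomial ℝ) = C ((k + 1 : ℕ) : ℝ) by simp]
  cases k with
  | zero => simp; ring
  | succ k' =>
    have e2 : (k' + 1 : ℕ) - 1 = k' := rfl
    rw [e2]
    push_cast
    simp only [map_sub, map_add, map_one, C_eq_natCast]
    ring

/-- for `d ≥ 2` and `1 ≤ j < d`,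
`A_{d,j}(t) = (1 + t(d−2)) A_{d−1,j}(t) + t(1−t) (A_{d−1,j})'(t)`. -/
theorem APoly_recurrence (d j : ℕ) (hd : 2 ≤ d) (hj : 1 ≤ j) (hjd : j < d) :
    APoly d j =
      (1 + C ((d : ℝ) - 2) * X) * APoly (d - 1) j
      + X * (1 - X) * derivative (APoly (d - 1) j) := by
  obtain ⟨n, rfl⟩ : ∃ n, d = n + 1 := ⟨d - 1, by omega⟩
  have hn : 1 ≤ n := by omega
  have hd1 : (n + 1) - 1 = n := rfl
  rw [hd1]
  have hc : ((n + 1 : ℕ) : ℝ) - 2 = (n : ℝ) - 1 := by push_cast; ring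
  rw [hc]
  -- the two filters
  set Tτ := Finset.univ.filter (fun τ : Equiv.Perm (Fin n) => svalA n τ 0 = j) with hTτ
  set Tσ := Finset.univ.filter (fun σ : Equiv.Perm (Fin (n+1)) => svalA (n+1) σ 0 = j) with hTσ
  -- bijection step
  have hmem : ∀ a ∈ Tτ ×ˢ (Finset.univ : Finset (Fin n)),
      insPerm n a.1 a.2.succ ∈ Tσ := by
    rintro ⟨τ, p⟩ ha
    simp only [hTτ, hTσ, Finset.mem_product, Finset.mem_filter, Finset.mem_univ, true_and] at ha ⊢
    rw [svalA_insPerm_zero]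
    exact ha.1
  have hinj : Set.InjOn (fun a : Equiv.Perm (Fin n) × Fin n => insPerm n a.1 a.2.succ)
      ↑(Tτ ×ˢ (Finset.univ : Finset (Fin n))) := by
    rintro ⟨τ, p⟩ _ ⟨τ', p'⟩ _ hab
    obtain ⟨h1, h2⟩ := insPerm_inj hab
    exact Prod.ext h1 h2
  have hcards : Tσ.card ≤ (Tτ ×ˢ (Finset.univ : Finset (Fin n))).card := by
    rw [Finset.card_product, hTσ, hTτ, card_sval_filter hj (by omega),
      card_sval_filter hj (by omega)]
    simp only [Finset.card_univ, Fintype.card_fin, Nat.add_sub_cancel]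
    rw [mul_comm, Nat.mul_factorial_pred (by omega)]
  have hsurj : Set.SurjOn (fun a : Equiv.Perm (Fin n) × Fin n => insPerm n a.1 a.2.succ)
      ↑(Tτ ×ˢ (Finset.univ : Finset (Fin n))) ↑Tσ := by
    intro σ hσ
    obtain ⟨a, ha, hfa⟩ := Finset.surj_on_of_inj_on_of_card_le
      (fun a _ => insPerm n a.1 a.2.succ) (fun a ha => hmem a ha)
      (fun a b ha hb hab => hinj ha hb hab) hcards σ hσ
    exact ⟨a, ha, hfa.symm⟩
  have hbij : APoly (n+1) j
      = ∑ a ∈ Tτ ×ˢ (Finset.univ : Finset (Fin n)),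
          (X : Polynomial ℝ) ^ desA (n+1) (insPerm n a.1 a.2.succ) := by
    rw [APoly]
    exact (Finset.sum_nbij (fun a : Equiv.Perm (Fin n) × Fin n => insPerm n a.1 a.2.succ)
      hmem hinj hsurj (fun a _ => rfl)).symm
  rw [hbij, Finset.sum_product]
  have hinner : ∀ τ ∈ Tτ,
      ∑ p : Fin n, (X : Polynomial ℝ) ^ desA (n+1) (insPerm n τ p.succ)
        = (1 + C ((n:ℝ) - 1) * X) * X ^ desA n τ
          + X * (1 - X) * derivative (X ^ desA n τ : Polynomial ℝ) := by
    intro τ _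
    rw [sum_insert_poly hn τ, perterm hn (desA_le τ)]
  rw [Finset.sum_congr rfl hinner]
  rw [APoly, derivative_sum, Finset.mul_sum, Finset.mul_sum, ← Finset.sum_add_distrib]
end

section
/- For d ≥ 2 and 1 ≤ j ≤ d−1, the polynomial B^−_{d,j}(t) satisfies B^−_{d,j}(t) = 2(d−2) t B^−_{d−1,j}(t) + 2t(1−t) d/dt B^−_{d−1,j}(t) + t B_{d−1,j}(t). -/
open Polynomial

namespace BRecAux

open Finset Polynomial

lemma sval_bounds (d : ℕ) (f : Fin d → Fin d × Bool) (k : ℕ) :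
    sval d f k ≤ d ∧ -(d : ℤ) ≤ sval d f k := by
  unfold sval
  split
  · next h =>
    have h1 : ((f ⟨k, h⟩).1 : ℕ) < d := (f ⟨k, h⟩).1.isLt
    unfold BVal
    split <;> constructor <;> push_cast <;> omega
  · constructor <;> simp

/-- Insert the value `±(n+1)` at position `p` into `τ`. -/
def insB (n : ℕ) (τ : Fin n → Fin n × Bool) (p : Fin (n+1)) (s : Bool) :
    Fin (n+1) → Fin (n+1) × Bool :=
  p.insertNth (Fin.last n, s) (fun i => ((τ i).1.castSucc, (τ i).2))

lemma insB_same (n : ℕ) (τ : Fin n → Fin n × Bool) (p : Fin (n+1)) (s : Bool) :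
    insB n τ p s p = (Fin.last n, s) := Fin.insertNth_apply_same ..

lemma insB_succAbove (n : ℕ) (τ : Fin n → Fin n × Bool) (p : Fin (n+1)) (s : Bool) (i : Fin n) :
    insB n τ p s (p.succAbove i) = ((τ i).1.castSucc, (τ i).2) :=
  Fin.insertNth_apply_succAbove ..

lemma sval_insB_lt {n : ℕ} (τ : Fin n → Fin n × Bool) (p : Fin (n+1)) (s : Bool) {k : ℕ}
    (h : k < p.val) : sval (n+1) (insB n τ p s) k = sval n τ k := by
  have hk : k < n := by have := p.isLt; omega
  have hk1 : k < n + 1 := by omega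
  have he : (⟨k, hk1⟩ : Fin (n+1)) = p.succAbove ⟨k, hk⟩ := by
    rw [Fin.succAbove_of_castSucc_lt]
    · rfl
    · exact h
  unfold sval
  rw [dif_pos hk1, dif_pos hk]
  unfold BVal
  rw [he, insB_succAbove]
  simp

lemma sval_insB_self {n : ℕ} (τ : Fin n → Fin n × Bool) (p : Fin (n+1)) (s : Bool) :
    sval (n+1) (insB n τ p s) p.val = if s then ((n : ℤ)+1) else -((n : ℤ)+1) := by
  unfold sval
  rw [dif_pos p.isLt]
  unfold BVal
  have : (⟨p.val, p.isLt⟩ : Fin (n+1)) = p := rfl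
  rw [this, insB_same]
  simp [Fin.last]

lemma sval_insB_gt {n : ℕ} (τ : Fin n → Fin n × Bool) (p : Fin (n+1)) (s : Bool) {k : ℕ}
    (h : p.val < k) (hk : k ≤ n) : sval (n+1) (insB n τ p s) k = sval n τ (k-1) := by
  have hk1 : k - 1 < n := by omega
  have hk2 : k < n + 1 := by omega
  have he : (⟨k, hk2⟩ : Fin (n+1)) = p.succAbove ⟨k-1, hk1⟩ := by
    rw [Fin.succAbove_of_le_castSucc]
    · simp only [Fin.succ]
      congr 1
      omega
    · rw [Fin.le_def]
      simp only [Fin.coe_castSucc]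
      omega
  unfold sval
  rw [dif_pos hk2, dif_pos hk1]
  unfold BVal
  rw [he, insB_succAbove]
  simp

end BRecAux
namespace BRecAux

open Finset Polynomial

lemma insB_fst_ne_last {n : ℕ} (τ : Fin n → Fin n × Bool) (p : Fin (n+1)) (s : Bool)
    {x : Fin (n+1)} (hx : x ≠ p) : (insB n τ p s x).1 ≠ Fin.last n := by
  obtain ⟨i, hi⟩ := Fin.exists_succAbove_eq hx
  rw [← hi, insB_succAbove]
  exact (Fin.castSucc_lt_last _).ne

lemma isSignedPerm_insB {n : ℕ} {τ : Fin n → Fin n × Bool} (hτ : IsSignedPerm n τ)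
    (p : Fin (n+1)) (s : Bool) : IsSignedPerm (n+1) (insB n τ p s) := by
  intro a b hab
  simp only at hab
  by_cases ha : a = p
  · by_cases hb : b = p
    · rw [ha, hb]
    · rw [ha, insB_same] at hab
      exact absurd hab.symm (insB_fst_ne_last τ p s hb)
  · by_cases hb : b = p
    · rw [hb, insB_same] at hab
      exact absurd hab (insB_fst_ne_last τ p s ha)
    · obtain ⟨i, hi⟩ := Fin.exists_succAbove_eq ha
      obtain ⟨i', hi'⟩ := Fin.exists_succAbove_eq hb
      rw [← hi, ← hi', insB_succAbove, insB_succAbove] at hab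
      have h2 : i = i' := hτ (Fin.castSucc_injective _ hab)
      rw [← hi, ← hi', h2]

lemma insB_injective {n : ℕ} {τ τ' : Fin n → Fin n × Bool} {p p' : Fin (n+1)} {s s' : Bool}
    (h : insB n τ p s = insB n τ' p' s') : τ = τ' ∧ p = p' ∧ s = s' := by
  have hpp : p = p' := by
    by_contra hne
    have h1 := congrArg Prod.fst (congrFun h p)
    rw [insB_same] at h1
    exact insB_fst_ne_last τ' p' s' hne h1.symm
  subst hpp
  have h1 := congrFun h p
  rw [insB_same, insB_same] at h1
  have hs : s = s' := (Prod.ext_iff.mp h1).2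
  refine ⟨funext fun i => ?_, rfl, hs⟩
  have h2 := congrFun h (p.succAbove i)
  rw [insB_succAbove, insB_succAbove] at h2
  obtain ⟨h3, h4⟩ := Prod.ext_iff.mp h2
  simp only at h3 h4
  exact Prod.ext (Fin.castSucc_injective _ h3) h4

lemma exists_insB {n : ℕ} (σ : Fin (n+1) → Fin (n+1) × Bool) (hσ : IsSignedPerm (n+1) σ) :
    ∃ τ p s, σ = insB n τ p s ∧ IsSignedPerm n τ := by
  have hsurj : Function.Surjective (fun i => (σ i).1) :=
    Finite.injective_iff_surjective.mp hσ
  obtain ⟨p, hp⟩ := hsurj (Fin.last n)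
  simp only at hp
  have hne : ∀ i : Fin n, (σ (p.succAbove i)).1 ≠ Fin.last n := by
    intro i he
    exact Fin.succAbove_ne p i (hσ (he.trans hp.symm))
  refine ⟨fun i => ((σ (p.succAbove i)).1.castPred (hne i), (σ (p.succAbove i)).2), p, (σ p).2,
    ?_, ?_⟩
  · funext x
    by_cases hx : x = p
    · rw [hx, insB_same]
      exact Prod.ext hp rfl
    · obtain ⟨i, hi⟩ := Fin.exists_succAbove_eq hx
      rw [← hi, insB_succAbove]
      exact Prod.ext (Fin.castSucc_castPred _ (hne i)).symm rfl
  · intro a b hab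
    simp only at hab
    have h2 : (σ (p.succAbove a)).1 = (σ (p.succAbove b)).1 := by
      have := congrArg Fin.castSucc hab
      rwa [Fin.castSucc_castPred, Fin.castSucc_castPred] at this
    exact Fin.succAbove_right_injective (hσ h2)

end BRecAux
namespace BRecAux

open Finset Polynomial

lemma desB_insB_last {n : ℕ} (hn : 1 ≤ n) (τ : Fin n → Fin n × Bool) :
    desB (n+1) (insB n τ (Fin.last n) false) = desB n τ + 1 := by
  unfold desB
  rw [Finset.range_add_one, Finset.filter_insert]
  have h1 : sval (n+1) (insB n τ (Fin.last n) false) n = -((n:ℤ)+1) := by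
    have := sval_insB_self τ (Fin.last n) false
    simpa using this
  have h2 : sval (n+1) (insB n τ (Fin.last n) false) (n-1) = sval n τ (n-1) :=
    sval_insB_lt _ _ _ (by simp; omega)
  have hcond : sval (n+1) (insB n τ (Fin.last n) false) n <
      (if n = 0 then (0:ℤ) else sval (n+1) (insB n τ (Fin.last n) false) (n-1)) := by
    rw [if_neg (by omega), h1, h2]
    have := (sval_bounds n τ (n-1)).2
    omega
  rw [if_pos hcond, Finset.card_insert_of_notMem (by simp)]
  have hfe : Finset.filter (fun i => sval (n+1) (insB n τ (Fin.last n) false) i <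
        if i = 0 then (0:ℤ) else sval (n+1) (insB n τ (Fin.last n) false) (i-1))
        (Finset.range n)
      = Finset.filter (fun i => sval n τ i < if i = 0 then (0:ℤ) else sval n τ (i-1))
        (Finset.range n) := by
    apply Finset.filter_congr
    intro k hk
    simp only [Finset.mem_range] at hk
    have e1 : sval (n+1) (insB n τ (Fin.last n) false) k = sval n τ k :=
      sval_insB_lt _ _ _ (by simpa using hk)
    rw [e1]
    by_cases hk0 : k = 0
    · rw [if_pos hk0, if_pos hk0]
    · have e2 : sval (n+1) (insB n τ (Fin.last n) false) (k-1) = sval n τ (k-1) :=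
        sval_insB_lt _ _ _ (by simp; omega)
      rw [if_neg hk0, if_neg hk0, e2]
  rw [hfe]

lemma desB_insB_interior {n : ℕ} (τ : Fin n → Fin n × Bool) (p : Fin (n+1)) (s : Bool)
    (hp0 : p.val ≠ 0) (hpn : p.val ≠ n) :
    desB (n+1) (insB n τ p s) + (if sval n τ p.val < sval n τ (p.val - 1) then 1 else 0)
      = desB n τ + 1 := by
  set q := p.val with hq
  have hq1 : 1 ≤ q := by omega
  have hqn : q ≤ n - 1 := by have := p.isLt; omega
  have hn2 : 2 ≤ n := by have := p.isLt; omega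
  set σ := insB n τ p s with hσ
  set I : ℕ → ℕ := fun k =>
    if sval (n+1) σ k < (if k = 0 then (0:ℤ) else sval (n+1) σ (k-1)) then 1 else 0 with hI
  set J : ℕ → ℕ := fun k =>
    if sval n τ k < (if k = 0 then (0:ℤ) else sval n τ (k-1)) then 1 else 0 with hJ
  have hdesσ : desB (n+1) σ = ∑ k ∈ Finset.range (n+1), I k := Finset.card_filter _ _
  have hdesτ : desB n τ = ∑ k ∈ Finset.range n, J k := Finset.card_filter _ _
  have hpair : Finset.Ico q (q+2) = insert q {q+1} := by
    ext x
    rw [Finset.mem_Ico, Finset.mem_insert, Finset.mem_singleton]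
    omega
  have hsing : Finset.Ico q (q+1) = {q} := by
    ext x
    rw [Finset.mem_Ico, Finset.mem_singleton]
    omega
  have split1 : ∑ k ∈ Finset.range (n+1), I k =
      ∑ k ∈ Finset.Ico 0 q, I k + (I q + I (q+1)) + ∑ k ∈ Finset.Ico (q+2) (n+1), I k := by
    rw [Finset.range_eq_Ico,
      ← Finset.sum_Ico_consecutive I (Nat.zero_le q) (by omega : q ≤ n+1),
      ← Finset.sum_Ico_consecutive I (by omega : q ≤ q+2) (by omega : q+2 ≤ n+1),
      hpair, Finset.sum_insert (by simp), Finset.sum_singleton]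
    ring
  have split2 : ∑ k ∈ Finset.range n, J k =
      ∑ k ∈ Finset.Ico 0 q, J k + J q + ∑ k ∈ Finset.Ico (q+1) n, J k := by
    rw [Finset.range_eq_Ico,
      ← Finset.sum_Ico_consecutive J (Nat.zero_le q) (by omega : q ≤ n),
      ← Finset.sum_Ico_consecutive J (by omega : q ≤ q+1) (by omega : q+1 ≤ n),
      hsing, Finset.sum_singleton]
    ring
  -- low part
  have low : ∀ k ∈ Finset.Ico 0 q, I k = J k := by
    intro k hk
    simp only [Finset.mem_Ico] at hk
    have e1 : sval (n+1) σ k = sval n τ k := sval_insB_lt _ _ _ hk.2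
    simp only [hI, hJ]
    rw [e1]
    by_cases hk0 : k = 0
    · rw [if_pos hk0, if_pos hk0]
    · have e2 : sval (n+1) σ (k-1) = sval n τ (k-1) := sval_insB_lt _ _ _ (by omega)
      rw [if_neg hk0, if_neg hk0, e2]
  -- middle
  have eself : sval (n+1) σ q = if s then ((n:ℤ)+1) else -((n:ℤ)+1) := sval_insB_self τ p s
  have eprev : sval (n+1) σ (q-1) = sval n τ (q-1) := sval_insB_lt _ _ _ (by omega)
  have enext : sval (n+1) σ (q+1) = sval n τ q := by
    have := sval_insB_gt τ p s (by omega : p.val < q+1) (by omega : q+1 ≤ n)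
    simpa using this
  have bprev := sval_bounds n τ (q-1)
  have bq := sval_bounds n τ q
  have mid : I q + I (q+1) = 1 := by
    simp only [hI, if_neg (by omega : ¬ q = 0), if_neg (by omega : ¬ q + 1 = 0),
      Nat.add_sub_cancel]
    rw [eprev, enext]
    cases s
    · have ev : sval (n+1) σ q = -((n:ℤ)+1) := by simpa using eself
      have c1 : -((n:ℤ)+1) < sval n τ (q-1) := by omega
      have c2 : ¬ (sval n τ q < -((n:ℤ)+1)) := by omega
      rw [ev, if_pos c1, if_neg c2]
    · have ev : sval (n+1) σ q = ((n:ℤ)+1) := by simpa using eself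
      have c1 : ¬ ((n:ℤ)+1 < sval n τ (q-1)) := by omega
      have c2 : sval n τ q < ((n:ℤ)+1) := by omega
      rw [ev, if_neg c1, if_pos c2]
  -- high part
  have high : ∑ k ∈ Finset.Ico (q+2) (n+1), I k = ∑ k ∈ Finset.Ico (q+1) n, J k := by
    rw [Finset.sum_Ico_eq_sum_range, Finset.sum_Ico_eq_sum_range]
    have hc : n + 1 - (q + 2) = n - (q + 1) := by omega
    rw [hc]
    apply Finset.sum_congr rfl
    intro k hk
    simp only [Finset.mem_range] at hk
    have hkn : q + 2 + k ≤ n := by omega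
    have e1 : sval (n+1) σ (q+2+k) = sval n τ (q+1+k) := by
      have h := sval_insB_gt τ p s (show p.val < q+2+k by omega) hkn
      rwa [show q+2+k-1 = q+1+k by omega] at h
    have e2 : sval (n+1) σ (q+2+k-1) = sval n τ (q+k) := by
      have h := sval_insB_gt τ p s (show p.val < q+1+k by omega) (show q+1+k ≤ n by omega)
      rw [show q+2+k-1 = q+1+k by omega]
      rwa [show q+1+k-1 = q+k by omega] at h
    simp only [hI, hJ, if_neg (by omega : ¬ q + 2 + k = 0), if_neg (by omega : ¬ q + 1 + k = 0)]
    rw [e1, e2, show q+1+k-1 = q+k by omega]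
  have hJq : J q = if sval n τ q < sval n τ (q - 1) then 1 else 0 := by
    simp only [hJ, if_neg (by omega : ¬ q = 0)]
  rw [hdesσ, hdesτ, split1, split2, Finset.sum_congr rfl low, mid, high, ← hJq]
  have hee : (Finset.Ico 0 q).sum J = ∑ k ∈ Finset.Ico 0 q, J k := rfl
  rw [hee]
  omega

end BRecAux
namespace BRecAux

open Finset Polynomial

lemma desB_eq_Ico {n : ℕ} (τ : Fin n → Fin n × Bool) (h0 : 0 < sval n τ 0) :
    desB n τ = ((Finset.Ico 1 n).filter fun k => sval n τ k < sval n τ (k-1)).card := by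
  unfold desB
  congr 1
  ext k
  simp only [Finset.mem_filter, Finset.mem_range, Finset.mem_Ico]
  constructor
  · rintro ⟨hk, hc⟩
    by_cases hk0 : k = 0
    · rw [if_pos hk0] at hc
      subst hk0
      omega
    · rw [if_neg hk0] at hc
      exact ⟨⟨by omega, hk⟩, hc⟩
  · rintro ⟨⟨h1, h2⟩, hc⟩
    refine ⟨h2, ?_⟩
    rw [if_neg (by omega)]
    exact hc

lemma card_posfilter (n : ℕ) (P : ℕ → Prop) [DecidablePred P] :
    ((Finset.univ.filter fun p : Fin (n+1) => p ≠ 0 ∧ p ≠ Fin.last n).filter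
       fun p => P p.val).card
      = ((Finset.Ico 1 n).filter fun k => P k).card := by
  refine Finset.card_bij' (fun p _ => p.val) (fun k hk => ⟨k, ?_⟩) ?_ ?_ ?_ ?_
  · simp only [Finset.mem_filter, Finset.mem_Ico] at hk
    omega
  · intro p hp
    simp only [Finset.mem_filter, Finset.mem_univ, true_and] at hp
    obtain ⟨⟨hp0, hpl⟩, hP⟩ := hp
    simp only [Finset.mem_filter, Finset.mem_Ico]
    have h0 : p.val ≠ 0 := fun h => hp0 (Fin.ext h)
    have hl : p.val ≠ n := fun h => hpl (Fin.ext h)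
    have := p.isLt
    exact ⟨⟨by omega, by omega⟩, hP⟩
  · intro k hk
    simp only [Finset.mem_filter, Finset.mem_Ico] at hk
    simp only [Finset.mem_filter, Finset.mem_univ, true_and]
    refine ⟨⟨?_, ?_⟩, hk.2⟩
    · intro h
      have := congrArg Fin.val h
      simp at this
      omega
    · intro h
      have := congrArg Fin.val h
      simp at this
      omega
  · intro p hp
    exact Fin.ext rfl
  · intro k hk
    rfl

lemma poly_alg (n m : ℕ) (hn : 1 ≤ n) (hm : m ≤ n - 1) :
    (2 : Polynomial ℝ) * (m • ((X : Polynomial ℝ) ^ m) + (n - 1 - m) • ((X : Polynomial ℝ) ^ (m + 1)))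
      = C (2 * (((n + 1 : ℕ) : ℝ) - 2)) * X * X ^ m
        + 2 * X * (1 - X) * derivative ((X : Polynomial ℝ) ^ m) := by
  rw [derivative_X_pow, nsmul_eq_mul, nsmul_eq_mul]
  have e1 : ((m : ℕ) : Polynomial ℝ) = C ((m : ℕ) : ℝ) := by
    rw [Polynomial.C_eq_natCast]
  have e2 : ((n - 1 - m : ℕ) : Polynomial ℝ) = C ((n : ℝ) - 1 - (m : ℝ)) := by
    rw [← Polynomial.C_eq_natCast]
    congr 1
    push_cast [Nat.cast_sub (by omega : m ≤ n - 1), Nat.cast_sub hn]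
    ring
  have e3 : C (2 * (((n + 1 : ℕ) : ℝ) - 2)) = 2 * (C ((n:ℕ) : ℝ) - 1) := by
    push_cast
    rw [show (2 : ℝ) * (((n:ℝ) + 1) - 2) = 2 * ((n:ℝ) - 1) by ring]
    rw [map_mul, map_sub, map_one, show (C 2 : Polynomial ℝ) = 2 from map_ofNat C 2]
  rw [e1, e2, e3]
  have e4 : C ((n : ℝ) - 1 - (m : ℝ)) = C ((n:ℕ) : ℝ) - 1 - C ((m:ℕ) : ℝ) := by
    rw [map_sub, map_sub, map_one]
  rw [e4]
  rcases Nat.eq_zero_or_pos m with hm0 | hm0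
  · subst hm0
    simp only [Nat.cast_zero, map_zero, pow_zero]
    ring
  · obtain ⟨m', rfl⟩ : ∃ m', m = m' + 1 := ⟨m - 1, by omega⟩
    simp only [Nat.add_sub_cancel]
    ring

end BRecAux
namespace BRecAux

open Finset Polynomial

lemma mem_BminusSet {n : ℕ} {j : ℤ} {f : Fin n → Fin n × Bool} :
    f ∈ BminusSet n j ↔ IsSignedPerm n f ∧ sval n f 0 = j ∧ sval n f (n-1) < 0 := by
  unfold BminusSet
  simp

end BRecAux

open Finset Polynomial BRecAux in
/-- for `d ≥ 2` and `1 ≤ j ≤ d−1`,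
`B^−_{d,j}(t) = 2(d−2) t B^−_{d−1,j}(t) + 2t(1−t) (B^−_{d−1,j})'(t) + t B_{d−1,j}(t)`. -/
theorem BminusPoly_diff_recurrence (d : ℕ) (j : ℤ) (hd : 2 ≤ d) (hj : 1 ≤ j)
    (hjd : j ≤ (d : ℤ) - 1) :
    BminusPoly d j =
      C (2 * ((d : ℝ) - 2)) * X * BminusPoly (d - 1) j
      + 2 * X * (1 - X) * derivative (BminusPoly (d - 1) j)
      + X * BPoly (d - 1) j := by
  classical
  obtain ⟨n, rfl⟩ : ∃ n, d = n + 1 := ⟨d - 1, by omega⟩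
  have hn : 1 ≤ n := by omega
  have hjn : j ≤ (n : ℤ) := by
    push_cast at hjd
    omega
  rw [show n + 1 - 1 = n from rfl]
  set T : Finset ((Fin n → Fin n × Bool) × Fin (n+1) × Bool) :=
    Finset.univ.filter (fun x =>
      IsSignedPerm n x.1 ∧ sval n x.1 0 = j ∧ x.2.1 ≠ 0 ∧
      (x.2.1 = Fin.last n → x.2.2 = false) ∧
      (x.2.1 ≠ Fin.last n → sval n x.1 (n-1) < 0)) with hT
  set Q : Finset (Fin (n+1)) :=
    Finset.univ.filter (fun p : Fin (n+1) => p ≠ 0 ∧ p ≠ Fin.last n) with hQ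
  -- Step 1 : the bijection between B⁻_{n+1,j} and insertion data
  have step1 : BminusPoly (n+1) j
      = ∑ x ∈ T, (X : Polynomial ℝ) ^ desB (n+1) (insB n x.1 x.2.1 x.2.2) := by
    unfold BminusPoly
    symm
    apply Finset.sum_bij (fun x (_ : x ∈ T) => insB n x.1 x.2.1 x.2.2)
    · intro x hx
      simp only [hT, Finset.mem_filter, Finset.mem_univ, true_and] at hx
      obtain ⟨h1, h2, h3, h4, h5⟩ := hx
      have hp0 : x.2.1.val ≠ 0 := fun h => h3 (Fin.ext h)
      rw [mem_BminusSet]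
      refine ⟨isSignedPerm_insB h1 _ _, ?_, ?_⟩
      · rw [sval_insB_lt x.1 x.2.1 x.2.2 (by omega : 0 < x.2.1.val)]
        exact h2
      · rw [show n + 1 - 1 = n from rfl]
        by_cases hl : x.2.1 = Fin.last n
        · have hv : x.2.1.val = n := by rw [hl]; rfl
          have hs := h4 hl
          have hself := sval_insB_self x.1 x.2.1 x.2.2
          rw [hv] at hself
          rw [hself, hs, if_neg (by simp)]
          omega
        · have hvn : x.2.1.val ≠ n := fun h => hl (Fin.ext h)
          have hlt : x.2.1.val < n := by have := x.2.1.isLt; omega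
          rw [sval_insB_gt x.1 x.2.1 x.2.2 hlt (le_refl n)]
          exact h5 hl
    · intro a ha b hb hab
      obtain ⟨h1, h2, h3⟩ := insB_injective hab
      exact Prod.ext h1 (Prod.ext h2 h3)
    · intro σ hσ
      rw [mem_BminusSet] at hσ
      obtain ⟨hsp, hs0, hsl⟩ := hσ
      obtain ⟨τ, p, s, rfl, hτ⟩ := exists_insB σ hsp
      rw [show n + 1 - 1 = n from rfl] at hsl
      have hp0 : p.val ≠ 0 := by
        intro h
        rw [← h, sval_insB_self] at hs0
        cases s <;> simp at hs0 <;> omega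
      have hτ0 : sval n τ 0 = j := by
        rw [← sval_insB_lt τ p s (by omega : 0 < p.val)]
        exact hs0
      refine ⟨(τ, p, s), ?_, rfl⟩
      simp only [hT, Finset.mem_filter, Finset.mem_univ, true_and]
      refine ⟨hτ, hτ0, fun h => hp0 (by rw [h]; rfl), ?_, ?_⟩
      · intro hl
        have hv : p.val = n := by rw [hl]; rfl
        have hself := sval_insB_self τ p s
        rw [hv] at hself
        rw [hself] at hsl
        cases s
        · rfl
        · simp at hsl
          exfalso
          omega
      · intro hl
        have hvn : p.val ≠ n := fun h => hl (Fin.ext h)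
        have hlt : p.val < n := by have := p.isLt; omega
        rw [← sval_insB_gt τ p s hlt (le_refl n)]
        exact hsl
    · intro a ha
      rfl
  -- the part with the maximal entry at the end
  have hTlast : T.filter (fun x => x.2.1 = Fin.last n)
      = (Finset.univ.filter fun f : Fin n → Fin n × Bool =>
          IsSignedPerm n f ∧ sval n f 0 = j) ×ˢ
            ({(Fin.last n, false)} : Finset (Fin (n+1) × Bool)) := by
    ext x
    simp only [hT, Finset.mem_filter, Finset.mem_univ, true_and, Finset.mem_product,
      Finset.mem_singleton]
    constructor
    · rintro ⟨⟨h1, h2, h3, h4, h5⟩, h6⟩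
      exact ⟨⟨h1, h2⟩, Prod.ext h6 (h4 h6)⟩
    · rintro ⟨⟨h1, h2⟩, h3⟩
      have h6 : x.2.1 = Fin.last n := by rw [h3]
      have h7 : x.2.2 = false := by rw [h3]
      have hl0 : x.2.1 ≠ 0 := by
        rw [h6]
        intro h
        have := congrArg Fin.val h
        simp at this
        omega
      exact ⟨⟨h1, h2, hl0, fun _ => h7, fun hne => absurd h6 hne⟩, h6⟩
  have end1 : ∑ x ∈ T.filter (fun x => x.2.1 = Fin.last n),
        (X : Polynomial ℝ) ^ desB (n+1) (insB n x.1 x.2.1 x.2.2)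
      = X * BPoly n j := by
    rw [hTlast, Finset.sum_product]
    unfold BPoly
    rw [Finset.mul_sum]
    apply Finset.sum_congr rfl
    intro τ hτ
    rw [Finset.sum_singleton]
    show (X : Polynomial ℝ) ^ desB (n+1) (insB n τ (Fin.last n) false) = X * X ^ desB n τ
    rw [desB_insB_last hn τ, pow_succ]
    ring
  -- the interior part
  have hTint : T.filter (fun x => ¬ x.2.1 = Fin.last n)
      = BminusSet n j ×ˢ (Q ×ˢ (Finset.univ : Finset Bool)) := by
    ext x
    simp only [hT, hQ, Finset.mem_filter, Finset.mem_univ, true_and, Finset.mem_product,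
      mem_BminusSet]
    constructor
    · rintro ⟨⟨h1, h2, h3, h4, h5⟩, h6⟩
      exact ⟨⟨h1, h2, h5 h6⟩, ⟨h3, h6⟩, trivial⟩
    · rintro ⟨⟨h1, h2, h3⟩, ⟨h4, h5⟩, -⟩
      exact ⟨⟨h1, h2, h4, fun h => absurd h h5, fun _ => h3⟩, h5⟩
  have int1 : ∑ x ∈ T.filter (fun x => ¬ x.2.1 = Fin.last n),
        (X : Polynomial ℝ) ^ desB (n+1) (insB n x.1 x.2.1 x.2.2)
      = ∑ τ ∈ BminusSet n j,
          (C (2 * (((n+1 : ℕ) : ℝ) - 2)) * X * X ^ desB n τ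
            + 2 * X * (1 - X) * derivative ((X : Polynomial ℝ) ^ desB n τ)) := by
    rw [hTint]
    rw [Finset.sum_product]
    apply Finset.sum_congr rfl
    intro τ hτ
    obtain ⟨h1, h2, h3⟩ := mem_BminusSet.mp hτ
    have h0 : 0 < sval n τ 0 := by omega
    have hdes := desB_eq_Ico τ h0
    have hmle : desB n τ ≤ n - 1 := by
      rw [hdes]
      calc ((Finset.Ico 1 n).filter fun k => sval n τ k < sval n τ (k-1)).card
          ≤ (Finset.Ico 1 n).card := Finset.card_filter_le _ _
        _ = n - 1 := Nat.card_Ico 1 n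
    have hinner : ∀ p ∈ Q,
        (∑ s : Bool, (X : Polynomial ℝ) ^ desB (n+1) (insB n τ p s))
          = 2 * (if sval n τ p.val < sval n τ (p.val - 1) then (X : Polynomial ℝ) ^ desB n τ
              else X ^ (desB n τ + 1)) := by
      intro p hp
      simp only [hQ, Finset.mem_filter, Finset.mem_univ, true_and] at hp
      have hp0 : p.val ≠ 0 := fun h => hp.1 (Fin.ext h)
      have hpn : p.val ≠ n := fun h => hp.2 (Fin.ext h)
      have key : ∀ s : Bool, (X : Polynomial ℝ) ^ desB (n+1) (insB n τ p s)
          = (if sval n τ p.val < sval n τ (p.val - 1) then (X : Polynomial ℝ) ^ desB n τ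
              else X ^ (desB n τ + 1)) := by
        intro s
        have h := desB_insB_interior τ p s hp0 hpn
        by_cases hc : sval n τ p.val < sval n τ (p.val - 1)
        · rw [if_pos hc] at h ⊢
          have he : desB (n+1) (insB n τ p s) = desB n τ := by omega
          rw [he]
        · rw [if_neg hc] at h ⊢
          have he : desB (n+1) (insB n τ p s) = desB n τ + 1 := by omega
          rw [he]
      rw [Fintype.sum_bool, key true, key false, ← two_mul]
    rw [show (∑ y ∈ Q ×ˢ (Finset.univ : Finset Bool),
          (X : Polynomial ℝ) ^ desB (n+1) (insB n τ y.1 y.2))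
        = ∑ p ∈ Q, ∑ s : Bool, (X : Polynomial ℝ) ^ desB (n+1) (insB n τ p s)
      from Finset.sum_product Q Finset.univ _]
    rw [Finset.sum_congr rfl hinner, ← Finset.mul_sum, Finset.sum_ite, Finset.sum_const,
      Finset.sum_const]
    have hc1 : (Q.filter fun p => sval n τ p.val < sval n τ (p.val - 1)).card = desB n τ := by
      rw [hQ, card_posfilter n (fun k => sval n τ k < sval n τ (k-1))]
      exact hdes.symm
    have hc2 : (Q.filter fun p => ¬ sval n τ p.val < sval n τ (p.val - 1)).card
        = n - 1 - desB n τ := by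
      rw [hQ, card_posfilter n (fun k => ¬ sval n τ k < sval n τ (k-1))]
      have htot := Finset.card_filter_add_card_filter_not
        (s := Finset.Ico 1 n) (fun k => sval n τ k < sval n τ (k-1))
      rw [Nat.card_Ico, ← hdes] at htot
      omega
    rw [hc1, hc2]
    exact poly_alg n (desB n τ) hn hmle
  rw [step1, ← Finset.sum_filter_add_sum_filter_not T (fun x => x.2.1 = Fin.last n)
      (fun x => (X : Polynomial ℝ) ^ desB (n+1) (insB n x.1 x.2.1 x.2.2)),
    end1, int1]
  unfold BminusPoly
  rw [derivative_sum, Finset.mul_sum, Finset.mul_sum, Finset.sum_add_distrib]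
  ring
end

section
/- For d ≥ 1 and 1 ≤ j ≤ d, the identity B^+_{d,j}(t) = t^d B^−_{d,−j}(t^{−1}) holds as an identity of rational functions (equivalently, B^+(d,j,r) = B^−(d,−j,d−r) for all r). -/
/-- Negating all signs. -/
def negSP (d : ℕ) (f : Fin d → Fin d × Bool) : Fin d → Fin d × Bool :=
  fun i => ((f i).1, !(f i).2)

lemma negSP_negSP (d : ℕ) (f : Fin d → Fin d × Bool) : negSP d (negSP d f) = f := by
  funext i; simp [negSP]

lemma BVal_negSP (d : ℕ) (f : Fin d → Fin d × Bool) (i : Fin d) :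
    BVal d (negSP d f) i = -(BVal d f i) := by
  unfold BVal negSP
  cases h : (f i).2 <;> simp [h]

lemma sval_negSP (d : ℕ) (f : Fin d → Fin d × Bool) (k : ℕ) :
    sval d (negSP d f) k = -(sval d f k) := by
  unfold sval
  split <;> simp [BVal_negSP]

lemma BVal_ne_zero (d : ℕ) (f : Fin d → Fin d × Bool) (i : Fin d) : BVal d f i ≠ 0 := by
  unfold BVal
  split <;> omega

lemma BVal_inj (d : ℕ) (f : Fin d → Fin d × Bool) (hf : IsSignedPerm d f)
    {i i' : Fin d} (h : BVal d f i = BVal d f i') : i = i' := by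
  apply hf
  unfold BVal at h
  have := (f i).1.isLt
  have := (f i').1.isLt
  split at h <;> split at h <;>
    · simp only at *
      exact Fin.val_injective (by omega)

lemma isSignedPerm_negSP (d : ℕ) (f : Fin d → Fin d × Bool) (hf : IsSignedPerm d f) :
    IsSignedPerm d (negSP d f) := by
  intro a b h
  exact hf h

lemma desB_negSP (d : ℕ) (f : Fin d → Fin d × Bool) (hf : IsSignedPerm d f) :
    desB d (negSP d f) = d - desB d f := by
  unfold desB
  have key : ((Finset.range d).filter fun i =>
      sval d (negSP d f) i < if i = 0 then (0 : ℤ) else sval d (negSP d f) (i - 1))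
      = (Finset.range d).filter fun i =>
        ¬ (sval d f i < if i = 0 then (0 : ℤ) else sval d f (i - 1)) := by
    apply Finset.filter_congr
    intro i hi
    simp only [Finset.mem_range] at hi
    simp only [sval_negSP]
    rcases eq_or_ne i 0 with h0 | h0
    · subst h0
      simp only [if_pos rfl, reduceIte]
      have hne : sval d f 0 ≠ 0 := by
        unfold sval; rw [dif_pos (by omega : 0 < d)]; exact BVal_ne_zero d f _
      constructor <;> intro h <;> omega
    · simp only [if_neg h0]
      have hlt : i - 1 < d := by omega
      have hne : sval d f i ≠ sval d f (i - 1) := by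
        unfold sval
        rw [dif_pos hi, dif_pos hlt]
        intro h
        have := BVal_inj d f hf h
        have : i = i - 1 := congrArg Fin.val this
        omega
      constructor <;> intro h <;> omega
  rw [key, Finset.filter_not, Finset.card_sdiff_of_subset (Finset.filter_subset _ _),
    Finset.card_range]

lemma mem_shift (d : ℕ) (j : ℤ) (r : ℕ) (hr : r ≤ d) (f : Fin d → Fin d × Bool)
    (hf : f ∈ (BplusSet d j).filter (fun f => desB d f = r)) :
    negSP d f ∈ (BminusSet d (-j)).filter (fun f => desB d f = d - r) := by
  simp only [BplusSet, BminusSet, Finset.mem_filter, Finset.mem_univ, true_and] at *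
  obtain ⟨⟨h1, h2, h3⟩, h4⟩ := hf
  refine ⟨⟨isSignedPerm_negSP d f h1, ?_, ?_⟩, ?_⟩
  · rw [sval_negSP, h2]
  · rw [sval_negSP]; omega
  · rw [desB_negSP d f h1, h4]

lemma mem_shift' (d : ℕ) (j : ℤ) (r : ℕ) (hr : r ≤ d) (f : Fin d → Fin d × Bool)
    (hf : f ∈ (BminusSet d (-j)).filter (fun f => desB d f = d - r)) :
    negSP d f ∈ (BplusSet d j).filter (fun f => desB d f = r) := by
  simp only [BplusSet, BminusSet, Finset.mem_filter, Finset.mem_univ, true_and] at *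
  obtain ⟨⟨h1, h2, h3⟩, h4⟩ := hf
  have hdes : desB d f ≤ d := by
    calc desB d f ≤ (Finset.range d).card := Finset.card_filter_le _ _
    _ = d := Finset.card_range d
  refine ⟨⟨isSignedPerm_negSP d f h1, ?_, ?_⟩, ?_⟩
  · rw [sval_negSP, h2]; ring
  · rw [sval_negSP]; omega
  · rw [desB_negSP d f h1]; omega

/-- for `d ≥ 1` and `1 ≤ j ≤ d`, `B^+_{d,j}(t) = t^d B^−_{d,−j}(t^{−1})`;
equivalently `B^+(d,j,r) = B^−(d,−j,d−r)` for all `r` (with `0 ≤ r ≤ d`). -/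
theorem Bplus_Bminus_reciprocity (d j : ℕ) (hd : 1 ≤ d) (hj : 1 ≤ j) (hjd : j ≤ d) :
    ∀ r ≤ d,
      ((BplusSet d (j : ℤ)).filter (fun f => desB d f = r)).card
        = ((BminusSet d (-(j : ℤ))).filter (fun f => desB d f = d - r)).card := by
  intro r hr
  apply Finset.card_bij' (fun f _ => negSP d f) (fun f _ => negSP d f)
  · intro f hf; exact mem_shift d j r hr f hf
  · intro f hf; exact mem_shift' d j r hr f hf
  · intro f _; exact negSP_negSP d f
  · intro f _; exact negSP_negSP d f
end
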